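/- arXiv:2008.02345 — 3 statements merged into one kernel-verified Lean document; each statement's English description precedes it below -/
import Mathlib

section
/- Let X and Y be totally ordered sets with |X| ≥ 3 and |Y| ≥ 3, and let m ≥ 2 be an integer with m < min(|X|,|Y|). Let M be the left Kan extension of the module Z_m along a product poset injection ψ : ⟦1,m+1⟧² ↪ X×Y. Then: (i) M is not interval-decomposable; (ii) for every product subset X'×Y' ⊆ X×Y with |X'| ≤ m and |Y'| ≤ m, the restriction M|_{X'×Y'} is interval-decomposable, i.e. M|_{X'×Y'} ∈ Dec(Int(X'×Y')). -/
open CategoryTheory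

attribute [local instance 10000] Preorder.smallCategory

attribute [local instance] Classical.propDecidable

abbrev PersistenceModule (K : Type) [Field K] (P : Type) [Preorder P] := P ⥤ ModuleCat.{0} K

variable (K : Type) [Field K]

/-- The internal linear map of a persistence module associated to `s ≤ t`. -/
def rho {P : Type} [Preorder P] (M : PersistenceModule K P) {s t : P} (h : s ≤ t) :
    M.obj s →ₗ[K] M.obj t :=
  (M.map (homOfLE h)).hom

def Pfd {P : Type} [Preorder P] (M : PersistenceModule K P) : Prop :=
  ∀ p : P, FiniteDimensional K (M.obj p)

def IsConvexSet {P : Type} [Preorder P] (S : Set P) : Prop :=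
  ∀ ⦃p s q : P⦄, p ≤ s → s ≤ q → p ∈ S → q ∈ S → s ∈ S

def IsConnectedSet {P : Type} [Preorder P] (S : Set P) : Prop :=
  ∀ p ∈ S, ∀ q ∈ S,
    Relation.ReflTransGen (fun a b => a ∈ S ∧ b ∈ S ∧ (a ≤ b ∨ b ≤ a)) p q

def IsIntervalSet {P : Type} [Preorder P] (S : Set P) : Prop :=
  IsConvexSet S ∧ IsConnectedSet S

def IsRectangleSet {X Y : Type} [Preorder X] [Preorder Y] (R : Set (X × Y)) : Prop :=
  ∃ (I : Set X) (J : Set Y), IsIntervalSet I ∧ IsIntervalSet J ∧ R = I ×ˢ J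

/-- The direct sum of the interval (indicator) modules of a family of convex sets. -/
noncomputable def intervalDirectSum {P : Type} [Preorder P] {ι : Type} (S : ι → Set P)
    (hS : ∀ i, IsConvexSet (S i)) : PersistenceModule K P where
  obj t := ModuleCat.of K ({i : ι // t ∈ S i} → K)
  map {s t} _ := ModuleCat.ofHom
    (LinearMap.pi (fun j : {i : ι // t ∈ S i} =>
      if hs : (s : P) ∈ S j.1 then LinearMap.proj (⟨j.1, hs⟩ : {i : ι // s ∈ S i}) else 0))
  map_id t := by
    refine ModuleCat.hom_ext (LinearMap.ext fun v => funext fun j => ?_)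
    show ((if hs : (t : P) ∈ S j.1 then
        LinearMap.proj (⟨j.1, hs⟩ : {i : ι // t ∈ S i}) else 0 :
          ({i : ι // t ∈ S i} → K) →ₗ[K] K)) v = v j
    rw [dif_pos j.2]
    rfl
  map_comp {s t u} f g := by
    refine ModuleCat.hom_ext (LinearMap.ext fun v => funext fun j => ?_)
    show ((if hs : (s : P) ∈ S j.1 then
        LinearMap.proj (⟨j.1, hs⟩ : {i : ι // s ∈ S i}) else 0 :
          ({i : ι // s ∈ S i} → K) →ₗ[K] K)) v =
      ((if ht : (t : P) ∈ S j.1 then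
        LinearMap.proj (⟨j.1, ht⟩ : {i : ι // t ∈ S i}) else 0 :
          ({i : ι // t ∈ S i} → K) →ₗ[K] K))
        (LinearMap.pi (fun j' : {i : ι // t ∈ S i} =>
          (if hs : (s : P) ∈ S j'.1 then
            LinearMap.proj (⟨j'.1, hs⟩ : {i : ι // s ∈ S i}) else 0 :
              ({i : ι // s ∈ S i} → K) →ₗ[K] K)) v)
    by_cases hs : (s : P) ∈ S j.1
    · have ht : (t : P) ∈ S j.1 := hS j.1 (leOfHom f) (leOfHom g) hs j.2
      rw [dif_pos hs, dif_pos ht, LinearMap.proj_apply, LinearMap.proj_apply,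
        LinearMap.pi_apply, dif_pos hs]
      rfl
    · by_cases ht : (t : P) ∈ S j.1
      · rw [dif_neg hs, dif_pos ht, LinearMap.zero_apply, LinearMap.proj_apply,
          LinearMap.pi_apply, dif_neg hs, LinearMap.zero_apply]
      · rw [dif_neg hs, dif_neg ht, LinearMap.zero_apply, LinearMap.zero_apply]

def InDec {P : Type} [Preorder P] (M : PersistenceModule K P) (𝒮 : Set (Set P)) : Prop :=
  ∃ (ι : Type) (S : ι → Set P) (hS : ∀ i, IsConvexSet (S i)),
    (∀ i, S i ∈ 𝒮) ∧ (∀ t : P, {i | t ∈ S i}.Finite) ∧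
      Nonempty (M ≅ intervalDirectSum K S hS)

def restrictMod {P : Type} [Preorder P] (M : PersistenceModule K P) (Q : Set P) :
    PersistenceModule K ↥Q :=
  (Subtype.mono_coe (· ∈ Q)).functor ⋙ M

def restrictClass {P : Type} (𝒮 : Set (Set P)) (Q : Set P) : Set (Set ↥Q) :=
  {T | ∃ S ∈ 𝒮, T = Subtype.val ⁻¹' S}

/-- Weak exactness of a persistence bimodule. -/
def WeaklyExact {X Y : Type} [Preorder X] [Preorder Y]
    (M : PersistenceModule K (X × Y)) : Prop :=
  ∀ (s t : X × Y) (h : s ≤ t),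
    (LinearMap.range (rho K M h) =
      LinearMap.range (rho K M (show (t.1, s.2) ≤ t from ⟨le_rfl, h.2⟩)) ⊓
      LinearMap.range (rho K M (show (s.1, t.2) ≤ t from ⟨h.1, le_rfl⟩))) ∧
    (LinearMap.ker (rho K M h) =
      LinearMap.ker (rho K M (show s ≤ (t.1, s.2) from ⟨h.1, le_rfl⟩)) ⊔
      LinearMap.ker (rho K M (show s ≤ (s.1, t.2) from ⟨le_rfl, h.2⟩)))

/-- A monotone family of submodules of a fixed vector space determines a persistence module
whose internal maps are the inclusions. -/
noncomputable def submoduleFunctor {P : Type} [Preorder P] {V : Type} [AddCommGroup V]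
    [Module K V] (S : P → Submodule K V) (hS : Monotone S) : PersistenceModule K P where
  obj p := ModuleCat.of K ↥(S p)
  map {p q} f := ModuleCat.ofHom (Submodule.inclusion (hS (leOfHom f)))
  map_id p := ModuleCat.hom_ext (LinearMap.ext fun x => rfl)
  map_comp {p q r} f g := ModuleCat.hom_ext (LinearMap.ext fun x => rfl)

/-- The submodule of `k^m` attached to the point `(i, j)` of the grid `⟦1,m+1⟧²` (indexed here
by `Fin (m+1) × Fin (m+1)`, zero-based) in the module `Z_m`: the zero space strictly below the
antidiagonal; on the antidiagonal, the `i`-th coordinate axis (image of `ι_i`) for `i < m` and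
the diagonal line (image of `δ_m`) at the corner `(m+1, 1)`; and all of `k^m` strictly above
the antidiagonal.  The internal maps of `Z_m` are the inclusions of these subspaces. -/
noncomputable def Zsub (m : ℕ) (p : Fin (m + 1) × Fin (m + 1)) : Submodule K (Fin m → K) :=
  if p.1.val + p.2.val < m then ⊥
  else if p.1.val + p.2.val = m then
    (if h : p.1.val < m then Submodule.span K {Pi.single (⟨p.1.val, h⟩ : Fin m) (1 : K)}
     else Submodule.span K {fun _ : Fin m => (1 : K)})
  else ⊤

theorem Zsub_monotone (m : ℕ) : Monotone (Zsub K m) := by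
  intro p q hpq
  have h1 : p.1.val ≤ q.1.val := hpq.1
  have h2 : p.2.val ≤ q.2.val := hpq.2
  unfold Zsub
  split_ifs with hp1 hq1 hq2 hq1 hp2 hq2 hq3 hp hq hq hq hq <;>
    first
      | exact bot_le
      | exact le_top
      | omega
      | (have : p = q := by
          refine Prod.ext (Fin.ext ?_) (Fin.ext ?_) <;> omega
         subst this
         rfl)

/-- The left Kan extension of `Z_m` along the product poset injection
`ψ = f × g : ⟦1,m+1⟧² ↪ X × Y`: at `t` it is `(Z_m)_{max ψ_{≤t}}` when
`ψ_{≤t} = {u | ψ(u) ≤ t}` is nonempty (realized as the directed supremum of the monotone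
family `Zsub` over `ψ_{≤t}`) and `0` otherwise, with internal morphisms the inclusions. -/
noncomputable def kanSub {X Y : Type} [LinearOrder X] [LinearOrder Y] (m : ℕ)
    (f : Fin (m + 1) → X) (g : Fin (m + 1) → Y) (t : X × Y) : Submodule K (Fin m → K) :=
  ⨆ (u : Fin (m + 1) × Fin (m + 1)) (_ : ((f u.1, g u.2) : X × Y) ≤ t), Zsub K m u

theorem kanSub_monotone {X Y : Type} [LinearOrder X] [LinearOrder Y] (m : ℕ)
    (f : Fin (m + 1) → X) (g : Fin (m + 1) → Y) : Monotone (kanSub K m f g) := by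
  intro s t h
  refine iSup_le fun u => iSup_le fun hu => ?_
  exact le_iSup_of_le u (le_iSup_of_le (hu.trans h) le_rfl)

/-- The left Kan extension `M` of `Z_m` along `ψ`, as a persistence module over `X × Y`. -/
noncomputable def kanModule {X Y : Type} [LinearOrder X] [LinearOrder Y] (m : ℕ)
    (f : Fin (m + 1) → X) (g : Fin (m + 1) → Y) : PersistenceModule K (X × Y) :=
  submoduleFunctor K (kanSub K m f g) (kanSub_monotone K m f g)

noncomputable section

variable (K : Type) [Field K]

/-- The spanning vector of the line attached to antidiagonal index `i`. -/
def wVec (m : ℕ) (i : Fin (m + 1)) : Fin m → K :=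
  if h : i.val < m then Pi.single (⟨i.val, h⟩ : Fin m) (1 : K) else fun _ => 1

lemma wVec_apply (m : ℕ) (i : Fin (m + 1)) (j : Fin m) :
    wVec K m i j = (if i = j.castSucc then 1 else 0) + (if i = Fin.last m then 1 else 0) := by
  unfold wVec
  by_cases h : i.val < m
  · have hlast : i ≠ Fin.last m := by intro hc; rw [hc] at h; simp at h
    rw [dif_pos h, if_neg hlast, add_zero, Pi.single_apply]
    by_cases hc : i = j.castSucc
    · have hji : j = ⟨i.val, h⟩ := by subst hc; simp [Fin.ext_iff]
      rw [if_pos hc, if_pos hji]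
    · have hji : ¬ j = (⟨i.val, h⟩ : Fin m) := by
        intro hc2
        have : j.val = i.val := by rw [hc2]
        exact hc (Fin.ext (by simpa using this.symm))
      rw [if_neg hc, if_neg hji]
  · have hlast : i = Fin.last m := Fin.ext (by rw [Fin.val_last]; omega)
    have hcs : i ≠ j.castSucc := by
      intro hc; rw [hc] at h; simp at h
    rw [dif_neg h, if_neg hcs, if_pos hlast, zero_add]

lemma wVec_ne_zero (m : ℕ) (hm : 0 < m) (i : Fin (m + 1)) : wVec K m i ≠ 0 := by
  unfold wVec
  split_ifs with h
  · intro hc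
    have := congrFun hc ⟨i.val, h⟩
    simp [Pi.single_apply] at this
  · intro hc
    have := congrFun hc ⟨0, hm⟩
    simp at this

end
section ZsubLemmas

variable (K : Type) [Field K]

lemma Zsub_eq_bot (m : ℕ) (p : Fin (m+1) × Fin (m+1)) (h : p.1.val + p.2.val < m) :
    Zsub K m p = ⊥ := by
  unfold Zsub; rw [if_pos h]

lemma Zsub_eq_top (m : ℕ) (p : Fin (m+1) × Fin (m+1)) (h : m < p.1.val + p.2.val) :
    Zsub K m p = ⊤ := by
  unfold Zsub; rw [if_neg (by omega), if_neg (by omega)]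

lemma Zsub_eq_span (m : ℕ) (p : Fin (m+1) × Fin (m+1)) (h : p.1.val + p.2.val = m) :
    Zsub K m p = Submodule.span K {wVec K m p.1} := by
  unfold Zsub wVec
  rw [if_neg (by omega), if_pos h]
  split_ifs <;> rfl

lemma kanSub_apply {X Y : Type} [LinearOrder X] [LinearOrder Y] (m : ℕ)
    (f : Fin (m + 1) → X) (g : Fin (m + 1) → Y) (hf : StrictMono f) (hg : StrictMono g)
    (a b : Fin (m+1)) : kanSub K m f g (f a, g b) = Zsub K m (a, b) := by
  refine le_antisymm (iSup_le fun u => iSup_le fun hu => ?_)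
    (le_iSup_of_le (a, b) (le_iSup_of_le ⟨le_rfl, le_rfl⟩ le_rfl))
  exact Zsub_monotone K m ⟨hf.le_iff_le.mp hu.1, hg.le_iff_le.mp hu.2⟩

/-- Classification of the values of `kanSub`. -/
lemma kanSub_cases {X Y : Type} [LinearOrder X] [LinearOrder Y] (m : ℕ)
    (f : Fin (m + 1) → X) (g : Fin (m + 1) → Y) (t : X × Y) :
    kanSub K m f g t = ⊥ ∨
    ∃ a b : Fin (m+1), kanSub K m f g t = Zsub K m (a, b) ∧
      (f a ≤ t.1 ∧ ∀ i, f i ≤ t.1 → i ≤ a) ∧ (g b ≤ t.2 ∧ ∀ j, g j ≤ t.2 → j ≤ b) := by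
  by_cases hx : ∃ i, f i ≤ t.1
  · by_cases hy : ∃ j, g j ≤ t.2
    · obtain ⟨a, ha, hamax⟩ := Finset.exists_max_image (Finset.univ.filter fun i => f i ≤ t.1)
        id (by obtain ⟨i, hi⟩ := hx; exact ⟨i, by simp [hi]⟩)
      obtain ⟨b, hb, hbmax⟩ := Finset.exists_max_image (Finset.univ.filter fun j => g j ≤ t.2)
        id (by obtain ⟨j, hj⟩ := hy; exact ⟨j, by simp [hj]⟩)
      simp only [Finset.mem_filter, Finset.mem_univ, true_and] at ha hb hamax hbmax
      right
      refine ⟨a, b, le_antisymm (iSup_le fun u => iSup_le fun hu =>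
        Zsub_monotone K m ⟨hamax u.1 (by simpa using hu.1), hbmax u.2 (by simpa using hu.2)⟩)
        (le_iSup_of_le (a, b) (le_iSup_of_le ⟨ha, hb⟩ le_rfl)),
        ⟨ha, fun i hi => hamax i (by simpa using hi)⟩,
        ⟨hb, fun j hj => hbmax j (by simpa using hj)⟩⟩
    · left
      refine le_antisymm (iSup_le fun u => iSup_le fun hu => absurd ⟨u.2, hu.2⟩ hy) bot_le
  · left
    refine le_antisymm (iSup_le fun u => iSup_le fun hu => absurd ⟨u.1, hu.1⟩ hx) bot_le

end ZsubLemmas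
section Independence

variable (K : Type) [Field K]

lemma wVec_linearIndependent (m : ℕ) (R : Set (Fin (m+1))) (i0 : Fin (m+1)) (hi0 : i0 ∉ R) :
    LinearIndependent K (fun i : R => wVec K m i.val) := by
  rw [Fintype.linearIndependent_iff]
  intro c hc i
  classical
  set c' : Fin (m+1) → K := fun i => if h : i ∈ R then c ⟨i, h⟩ else 0 with hc'def
  have hsum : ∑ i : Fin (m+1), c' i • wVec K m i = 0 := by
    have h1 : ∑ i : R, c i • wVec K m i.val = ∑ i : R, c' i.val • wVec K m i.val :=
      Finset.sum_congr rfl fun x _ => by simp [hc'def, x.2]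
    have h2 : ∑ i : R, c' i.val • wVec K m i.val = ∑ i ∈ R.toFinset, c' i • wVec K m i :=
      Finset.sum_set_coe (f := fun i => c' i • wVec K m i) R
    have h3 : ∑ i ∈ R.toFinset, c' i • wVec K m i = ∑ i : Fin (m+1), c' i • wVec K m i :=
      Finset.sum_subset (Finset.subset_univ _) fun x _ hx => by
        simp only [Set.mem_toFinset] at hx; simp [hc'def, hx]
    rw [← h3, ← h2, ← h1, hc]
  have key : ∀ j : Fin m, c' j.castSucc + c' (Fin.last m) = 0 := by
    intro j
    have hj := congrFun hsum j
    simp only [Finset.sum_apply, Pi.smul_apply, smul_eq_mul, Pi.zero_apply] at hj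
    calc c' j.castSucc + c' (Fin.last m)
        = (∑ i : Fin (m+1), if i = j.castSucc then c' i else 0)
          + ∑ i : Fin (m+1), if i = Fin.last m then c' i else 0 := by
          rw [Finset.sum_ite_eq' Finset.univ j.castSucc c',
            Finset.sum_ite_eq' Finset.univ (Fin.last m) c']
          simp
      _ = ∑ i : Fin (m+1), c' i * wVec K m i j := by
          rw [← Finset.sum_add_distrib]
          refine Finset.sum_congr rfl fun x _ => ?_
          rw [wVec_apply, mul_add, mul_ite, mul_one, mul_zero, mul_ite, mul_one, mul_zero]
      _ = 0 := hj
  have hzero : c' i0 = 0 := by simp [hc'def, hi0]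
  have hlast : c' (Fin.last m) = 0 := by
    rcases Fin.eq_castSucc_or_eq_last i0 with ⟨j0, hj0⟩ | h
    · have hk := key j0
      rw [← hj0, hzero, zero_add] at hk
      exact hk
    · rw [← h]; exact hzero
  have hall : ∀ i : Fin (m+1), c' i = 0 := by
    intro i
    rcases Fin.eq_castSucc_or_eq_last i with ⟨j, hj⟩ | h
    · have hk := key j
      rw [← hj, hlast, add_zero] at hk; exact hk
    · rw [h]; exact hlast
  have hv := hall i.val
  simpa [hc'def] using hv

/-- A basis of `K^m` adapted to a set `R` of realized antidiagonal indices. -/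
lemma exists_good_basis (m : ℕ) (R : Set (Fin (m+1))) (i0 : Fin (m+1)) (hi0 : i0 ∉ R) :
    ∃ (ι : Type) (_ : Fintype ι) (b : Module.Basis ι K (Fin m → K)),
      ∀ i ∈ R, ∃ l, b l = wVec K m i := by
  have ind := (linearIndepOn_id_range_iff (wVec_linearIndependent K m R i0 hi0).injective).mpr (wVec_linearIndependent K m R i0 hi0)
  refine ⟨_, FiniteDimensional.fintypeBasisIndex (Module.Basis.extend ind), Module.Basis.extend ind,
    fun i hiR => ?_⟩
  have hmem : wVec K m i ∈ ind.extend (Set.subset_univ _) := by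
    apply ind.subset_extend
    exact ⟨⟨i, hiR⟩, rfl⟩
  exact ⟨⟨wVec K m i, hmem⟩, Module.Basis.extend_apply_self ind _⟩

end Independence
section GenIso

variable (K : Type) [Field K]

lemma repr_eq_zero {V : Type} [AddCommGroup V] [Module K V] {ι : Type} [Fintype ι]
    (b : Module.Basis ι K V) (W : Submodule K V)
    (hsp : W ≤ Submodule.span K ((W : Set V) ∩ Set.range b))
    {w : V} (hw : w ∈ W) {l : ι} (hl : b l ∉ W) : b.repr w l = 0 := by
  have h1 : w ∈ Submodule.span K (b '' {l | b l ∈ W}) := by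
    refine Submodule.span_mono ?_ (hsp hw)
    rintro x ⟨hx, l', rfl⟩
    exact ⟨l', hx, rfl⟩
  have h2 := (Module.Basis.mem_span_image b).1 h1
  by_contra hne
  exact hl (h2 (Finsupp.mem_support_iff.2 hne))

/-- The detailed construction: if every value of a monotone family `W` of submodules is
spanned by the basis vectors it contains, the associated persistence module decomposes. -/
noncomputable def basisEquiv {V : Type} [AddCommGroup V] [Module K V] {ι : Type} [Fintype ι]
    (b : Module.Basis ι K V) (W : Submodule K V)
    (hsp : W ≤ Submodule.span K ((W : Set V) ∩ Set.range b)) :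
    ↥W ≃ₗ[K] ({l : ι // b l ∈ W} → K) where
  toFun w l := b.repr w.val l.val
  map_add' x y := by funext l; simp
  map_smul' c x := by funext l; simp
  invFun c := ⟨∑ l : {l : ι // b l ∈ W}, c l • b l.val,
    Submodule.sum_mem _ fun l _ => Submodule.smul_mem _ _ l.2⟩
  left_inv w := by
    ext
    show (∑ l : {l : ι // b l ∈ W}, b.repr w.val l.val • b l.val : V) = w.val
    classical
    have h2 : ∑ l : {l : ι // b l ∈ W}, b.repr w.val l.val • b l.val
        = ∑ l ∈ {l : ι | b l ∈ W}.toFinset, b.repr w.val l • b l :=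
      Finset.sum_set_coe (f := fun l => b.repr w.val l • b l) _
    have h3 : ∑ l ∈ {l : ι | b l ∈ W}.toFinset, b.repr w.val l • b l
        = ∑ l : ι, b.repr w.val l • b l := by
      refine Finset.sum_subset (Finset.subset_univ _) fun x _ hx => ?_
      simp only [Set.mem_toFinset, Set.mem_setOf_eq] at hx
      rw [repr_eq_zero K b W hsp w.2 hx, zero_smul]
    rw [h2, h3, Module.Basis.sum_repr]
  right_inv c := by
    funext l₀
    show b.repr (∑ l : {l : ι // b l ∈ W}, c l • b l.val) l₀.val = c l₀
    classical
    rw [map_sum]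
    rw [Finsupp.finset_sum_apply]
    have : ∀ l : {l : ι // b l ∈ W},
        (b.repr (c l • b l.val)) l₀.val = if l = l₀ then c l else 0 := by
      intro l
      rw [map_smul, Finsupp.smul_apply, Module.Basis.repr_self, Finsupp.single_apply]
      by_cases h : l = l₀
      · rw [if_pos h, if_pos (by rw [h]), smul_eq_mul, mul_one]
      · rw [if_neg (fun hv => h (Subtype.ext hv)), if_neg h, smul_eq_mul, mul_zero]
    rw [Finset.sum_congr rfl fun l _ => this l, Finset.sum_ite_eq' Finset.univ l₀ (fun l => c l)]
    simp

lemma indec_of_basis {P : Type} [Preorder P] {V : Type} [AddCommGroup V] [Module K V]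
    {ι : Type} [Fintype ι] (b : Module.Basis ι K V)
    (W : P → Submodule K V) (hW : Monotone W)
    (hsp : ∀ t, W t ≤ Submodule.span K ((W t : Set V) ∩ Set.range b))
    (𝒮 : Set (Set P)) (h𝒮 : ∀ l : ι, {t | b l ∈ W t} ∈ 𝒮) :
    InDec K (submoduleFunctor K W hW) 𝒮 := by
  refine ⟨ι, fun l => {t | b l ∈ W t}, fun l p s q hps _ hp _ => hW hps hp,
    h𝒮, fun t => Set.toFinite _, ⟨?_⟩⟩
  refine NatIso.ofComponents (fun t => (basisEquiv K b (W t) (hsp t)).toModuleIso) ?_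
  intro s t h
  refine ModuleCat.hom_ext (LinearMap.ext fun w => funext fun l => ?_)
  dsimp [submoduleFunctor, intervalDirectSum, basisEquiv]
  show (b.repr w.val) l.val =
    (if hs : b l.val ∈ W s then LinearMap.proj (⟨l.val, hs⟩ : {l : ι // b l ∈ W s}) else
      (0 : ({l : ι // b l ∈ W s} → K) →ₗ[K] K))
      (fun j : {l : ι // b l ∈ W s} => (b.repr w.val) j.val)
  by_cases hs : b l.val ∈ W s
  · rw [dif_pos hs]; rfl
  · rw [dif_neg hs, LinearMap.zero_apply]
    exact repr_eq_zero K b (W s) (hsp s) w.2 hs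

end GenIso
section PartTwo

variable (K : Type) [Field K]

lemma upset_isInterval {X Y : Type} [LinearOrder X] [LinearOrder Y] (S : Set (X × Y))
    (hS : ∀ a b : X × Y, a ∈ S → a ≤ b → b ∈ S) : IsIntervalSet S :=
  by
  constructor
  · intro p s q hps _ hp _
    exact hS p s hp hps
  · intro p hp q hq
    have hpr : p ≤ (max p.1 q.1, max p.2 q.2) := ⟨le_max_left _ _, le_max_left _ _⟩
    have hqr : q ≤ (max p.1 q.1, max p.2 q.2) := ⟨le_max_right _ _, le_max_right _ _⟩
    have hr := hS p _ hp hpr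
    exact Relation.ReflTransGen.tail (Relation.ReflTransGen.single ⟨hp, hr, Or.inl hpr⟩)
      ⟨hr, hq, Or.inr hqr⟩

lemma part_two {X Y : Type} [LinearOrder X] [LinearOrder Y] (m : ℕ)
    (f : Fin (m + 1) → X) (g : Fin (m + 1) → Y) (hf : StrictMono f) (hg : StrictMono g)
    (X' : Set X) (Y' : Set Y) (hX' : Cardinal.mk X' ≤ m) :
    InDec K (restrictMod K (kanModule K m f g) (X' ×ˢ Y'))
      (restrictClass {S : Set (X × Y) | IsIntervalSet S} (X' ×ˢ Y')) := by
  set R : Set (Fin (m+1)) := {a | ∃ x ∈ X', f a ≤ x ∧ ∀ i, f i ≤ x → i ≤ a} with hR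
  have hex : ∃ i0, i0 ∉ R := by
    by_contra hc
    push_neg at hc
    choose x hx1 hx2 hx3 using hc
    have hinj : Function.Injective (fun i => (⟨x i, hx1 i⟩ : X')) := by
      intro i i' hii
      simp only [Subtype.mk.injEq] at hii
      exact le_antisymm (hx3 i' i (hii ▸ hx2 i)) (hx3 i i' (hii.symm ▸ hx2 i'))
    have hle := (Cardinal.mk_le_of_injective hinj).trans hX'
    rw [Cardinal.mk_fin, Nat.cast_le] at hle
    omega
  obtain ⟨i0, hi0⟩ := hex
  obtain ⟨ι, hfin, b, hb⟩ := exists_good_basis K m R i0 hi0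
  haveI := hfin
  set W : ↥(X' ×ˢ Y') → Submodule K (Fin m → K) := fun t => kanSub K m f g t.val with hWdef
  have hW : Monotone W := fun s t h => kanSub_monotone K m f g h
  have hsp : ∀ t, W t ≤ Submodule.span K ((W t : Set (Fin m → K)) ∩ Set.range b) := by
    intro t
    rcases kanSub_cases K m f g t.val with h0 | ⟨a, b', heq, ⟨hfa, hfmax⟩, ⟨hgb, _⟩⟩
    all_goals show kanSub K m f g t.val ≤
      Submodule.span K ((kanSub K m f g t.val : Set (Fin m → K)) ∩ Set.range ⇑b)
    · rw [h0]; exact bot_le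
    · rw [heq]
      rcases lt_trichotomy (a.val + b'.val) m with hlt | heqm | hgt
      · rw [Zsub_eq_bot K m _ hlt]; exact bot_le
      · rw [Zsub_eq_span K m _ heqm]
        have haR : a ∈ R := ⟨t.val.1, t.2.1, hfa, hfmax⟩
        obtain ⟨l, hl⟩ := hb a haR
        refine Submodule.span_le.2 (Set.singleton_subset_iff.2 ?_)
        exact Submodule.subset_span ⟨Submodule.mem_span_singleton_self _, ⟨l, hl⟩⟩
      · rw [Zsub_eq_top K m _ hgt, Submodule.top_coe, Set.univ_inter, b.span_eq]
  have h𝒮 : ∀ l : ι, {t | b l ∈ W t} ∈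
      restrictClass {S : Set (X × Y) | IsIntervalSet S} (X' ×ˢ Y') := by
    intro l
    refine ⟨{p : X × Y | b l ∈ kanSub K m f g p},
      upset_isInterval _ (fun p q hp hpq => kanSub_monotone K m f g hpq hp), rfl⟩
  exact indec_of_basis K b W hW hsp _ h𝒮

end PartTwo
section PartOne

variable (K : Type) [Field K]

lemma wVec_not_parallel (m : ℕ) (hm : 2 ≤ m) {i i' : Fin (m+1)} (hne : i ≠ i')
    {a a' : K} (ha : a ≠ 0) (ha' : a' ≠ 0)
    (h : a' • wVec K m i = a • wVec K m i') : False := by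
  have hvne : i.val ≠ i'.val := fun hc => hne (Fin.ext hc)
  unfold wVec at h
  by_cases hi : i.val < m <;> by_cases hi' : i'.val < m
  · rw [dif_pos hi, dif_pos hi'] at h
    have hc := congrFun h ⟨i.val, hi⟩
    have hne2 : ¬ ((⟨i.val, hi⟩ : Fin m) = ⟨i'.val, hi'⟩) := fun hc2 =>
      hvne (by simpa [Fin.ext_iff] using hc2)
    rw [Pi.smul_apply, Pi.smul_apply, Pi.single_apply, Pi.single_apply,
      if_pos rfl, if_neg (fun hh => hvne (by simpa [Fin.ext_iff] using hh))] at hc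
    simp only [smul_eq_mul, mul_one, mul_zero] at hc
    exact ha' hc
  · rw [dif_pos hi, dif_neg hi'] at h
    have hk : ∃ k : Fin m, k ≠ ⟨i.val, hi⟩ := by
      by_cases h0 : i.val = 0
      · exact ⟨⟨1, by omega⟩, fun hc => by simp [Fin.ext_iff, h0] at hc⟩
      · exact ⟨⟨0, by omega⟩, fun hc => by simp [Fin.ext_iff] at hc; omega⟩
    obtain ⟨k, hk⟩ := hk
    have hc := congrFun h k
    rw [Pi.smul_apply, Pi.smul_apply, Pi.single_apply, if_neg hk] at hc
    simp only [smul_eq_mul, mul_zero, mul_one] at hc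
    exact ha hc.symm
  · rw [dif_neg hi, dif_pos hi'] at h
    have hk : ∃ k : Fin m, k ≠ ⟨i'.val, hi'⟩ := by
      by_cases h0 : i'.val = 0
      · exact ⟨⟨1, by omega⟩, fun hc => by simp [Fin.ext_iff, h0] at hc⟩
      · exact ⟨⟨0, by omega⟩, fun hc => by simp [Fin.ext_iff] at hc; omega⟩
    obtain ⟨k, hk⟩ := hk
    have hc := congrFun h k
    rw [Pi.smul_apply, Pi.smul_apply, Pi.single_apply, if_neg hk] at hc
    simp only [smul_eq_mul, mul_zero, mul_one] at hc
    exact ha' hc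
  · exact hvne (by omega)

lemma part_one {X Y : Type} [LinearOrder X] [LinearOrder Y] (m : ℕ) (hm : 2 ≤ m)
    (f : Fin (m + 1) → X) (g : Fin (m + 1) → Y) (hf : StrictMono f) (hg : StrictMono g) :
    ¬ InDec K (kanModule K m f g) {S : Set (X × Y) | IsIntervalSet S} := by
  rintro ⟨ι, S, hS, hmem, hfin, ⟨φ⟩⟩
  classical
  set M := kanModule K m f g with hM
  set N := intervalDirectSum K S hS with hN
  set T : X × Y := (f (Fin.last m), g (Fin.last m)) with hT
  set P : Fin (m+1) → X × Y := fun i => (f i, g i.rev) with hP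
  have hle : ∀ i, P i ≤ T := fun i =>
    ⟨hf.monotone (Fin.le_last i), hg.monotone (Fin.le_last i.rev)⟩
  have hanti : ∀ i : Fin (m+1), i.val + i.rev.val = m := by
    intro i
    have := i.isLt
    rw [Fin.val_rev]
    omega
  have hkP : ∀ i, kanSub K m f g (P i) = Submodule.span K {wVec K m i} := fun i =>
    (kanSub_apply K m f g hf hg i i.rev).trans (Zsub_eq_span K m _ (hanti i))
  have hkT : kanSub K m f g T = ⊤ :=
    (kanSub_apply K m f g hf hg (Fin.last m) (Fin.last m)).trans
      (Zsub_eq_top K m _ (by simp [Fin.val_last]; omega))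
  -- Fintype instances on the index sets
  haveI : ∀ t : X × Y, Fintype {i : ι // t ∈ S i} := fun t => Set.Finite.fintype (hfin t)
  -- cardinalities
  have hcard : ∀ t : X × Y,
      Module.finrank K ↥(kanSub K m f g t) = Fintype.card {i : ι // t ∈ S i} := by
    intro t
    have e : ↥(kanSub K m f g t) ≃ₗ[K] ({i : ι // t ∈ S i} → K) :=
      (φ.app t).toLinearEquiv
    rw [e.finrank_eq, Module.finrank_fintype_fun_eq_card]
  have hcT : Fintype.card {j : ι // T ∈ S j} = m := by
    rw [← hcard T, hkT, finrank_top, Module.finrank_fintype_fun_eq_card, Fintype.card_fin]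
  have hcP : ∀ i, Fintype.card {j : ι // P i ∈ S j} = 1 := by
    intro i
    rw [← hcard (P i), hkP i, finrank_span_singleton (wVec_ne_zero K m (by omega) i)]
  -- the distinguished elements
  have hxmem : ∀ i, wVec K m i ∈ kanSub K m f g (P i) := fun i => by
    rw [hkP i]; exact Submodule.mem_span_singleton_self _
  set x : ∀ i, ↥(kanSub K m f g (P i)) := fun i => ⟨wVec K m i, hxmem i⟩ with hx
  set z : ∀ i, ↥(kanSub K m f g T) := fun i => (M.map (homOfLE (hle i))).hom (x i) with hz
  have hzval : ∀ i, ((z i) : Fin m → K) = wVec K m i := fun i => rfl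
  have hzne : ∀ i, z i ≠ 0 := by
    intro i hc
    have h2 : ((z i) : Fin m → K) = 0 := by rw [hc]; rfl
    rw [hzval i] at h2
    exact wVec_ne_zero K m (by omega) i h2
  set u : ∀ i, N.obj T := fun i => φ.hom.app T (z i) with hu
  have hinj : Function.Injective (φ.hom.app T) := (φ.app T).toLinearEquiv.injective
  have hune : ∀ i, u i ≠ 0 := by
    intro i hc
    apply hzne i
    apply hinj
    erw [map_zero]
    exact hc
  set y : ∀ i, N.obj (P i) := fun i => φ.hom.app (P i) (x i) with hy
  have hnat : ∀ i, u i = N.map (homOfLE (hle i)) (y i) := by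
    intro i
    have := φ.hom.naturality (homOfLE (hle i))
    have happ := congrArg (fun (ψ : M.obj (P i) ⟶ N.obj T) => ψ (x i)) this
    exact happ
  have hcomp : ∀ i (l : {j : ι // T ∈ S j}) (hs : P i ∈ S l.val),
      u i l = y i ⟨l.val, hs⟩ := by
    intro i l hs
    rw [hnat i]
    show ((if hs' : P i ∈ S l.val then
        (LinearMap.proj (⟨l.val, hs'⟩ : {j : ι // P i ∈ S j}) :
          ({j : ι // P i ∈ S j} → K) →ₗ[K] K) else 0)) (y i) = _
    rw [dif_pos hs]
    rfl
  have hcomp0 : ∀ i (l : {j : ι // T ∈ S j}), P i ∉ S l.val → u i l = 0 := by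
    intro i l hs
    rw [hnat i]
    show ((if hs' : P i ∈ S l.val then
        (LinearMap.proj (⟨l.val, hs'⟩ : {j : ι // P i ∈ S j}) :
          ({j : ι // P i ∈ S j} → K) →ₗ[K] K) else 0)) (y i) = _
    rw [dif_neg hs]
    rfl
  -- choose the support index
  have hsig : ∀ i, ∃ l : {j : ι // T ∈ S j}, u i l ≠ 0 ∧ P i ∈ S l.val := by
    intro i
    have : ∃ l, u i l ≠ 0 := by
      by_contra hc
      push_neg at hc
      exact hune i (funext hc)
    obtain ⟨l, hl⟩ := this
    refine ⟨l, hl, ?_⟩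
    by_contra hs
    exact hl (hcomp0 i l hs)
  choose σ hσ1 hσ2 using hsig
  -- pigeonhole
  have hpig : ∃ i i', i ≠ i' ∧ σ i = σ i' := by
    have hlt : Fintype.card {j : ι // T ∈ S j} < Fintype.card (Fin (m+1)) := by
      rw [hcT, Fintype.card_fin]; omega
    obtain ⟨i, i', hne, heq⟩ := Fintype.exists_ne_map_eq_of_card_lt σ hlt
    exact ⟨i, i', hne, heq⟩
  obtain ⟨i, i', hne, hσeq⟩ := hpig
  -- uniqueness of the interval through P i
  have huniq : ∀ i (l l' : {j : ι // T ∈ S j}),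
      P i ∈ S l.val → P i ∈ S l'.val → l = l' := by
    intro i l l' h1 h2
    have hsub := Fintype.card_le_one_iff.1 (le_of_eq (hcP i))
    have h3 := hsub ⟨l.val, h1⟩ ⟨l'.val, h2⟩
    exact Subtype.ext (Subtype.mk_eq_mk.1 h3)
  have hsupp : ∀ i (l : {j : ι // T ∈ S j}), l ≠ σ i → u i l = 0 := by
    intro i l hl
    by_cases hs : P i ∈ S l.val
    · exact absurd (huniq i l (σ i) hs (hσ2 i)) hl
    · exact hcomp0 i l hs
  -- the two supports coincide; derive proportionality
  set a : K := u i (σ i) with ha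
  set a' : K := u i' (σ i') with ha'
  have hprop : a' • u i = a • u i' := by
    funext l
    erw [Pi.smul_apply, Pi.smul_apply, smul_eq_mul, smul_eq_mul]
    by_cases hl : l = σ i
    · subst hl
      have h1 : u i' (σ i) = a' := by rw [ha', hσeq]
      rw [h1, ← ha, mul_comm]
    · rw [hsupp i l hl, hsupp i' l (fun hc => hl (hc.trans hσeq.symm)), mul_zero, mul_zero]
  have hZ : a' • z i = a • z i' := by
    apply hinj
    erw [map_smul, map_smul]
    exact hprop
  have hW : a' • wVec K m i = a • wVec K m i' := by
    have h2 := congrArg (fun v : ↥(kanSub K m f g T) => (v : Fin m → K)) hZ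
    simp only [SetLike.val_smul] at h2
    rw [hzval, hzval] at h2
    exact h2
  have hane : a ≠ 0 := by
    intro hc
    apply hune i
    funext l
    by_cases hl : l = σ i
    · subst hl
      show u i (σ i) = (0:K)
      exact hc
    · show u i l = (0:K)
      exact hsupp i l hl
  have hane' : a' ≠ 0 := by
    intro hc
    apply hune i'
    funext l
    by_cases hl : l = σ i'
    · subst hl
      show u i' (σ i') = (0:K)
      exact hc
    · show u i' l = (0:K)
      exact hsupp i' l hl
  exact wVec_not_parallel K m hm hne hane hane' hW

end PartOne

/-- The left Kan extension of `Z_m` along a product poset injection is not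
interval-decomposable, although all its restrictions to product subsets of size at most
`m × m` are. -/
theorem kanModule_not_interval_decomposable_but_locally_decomposable
    (K : Type) [Field K] (X Y : Type) [LinearOrder X] [LinearOrder Y]
    (hX : 3 ≤ Cardinal.mk X) (hY : 3 ≤ Cardinal.mk Y)
    (m : ℕ) (hm : 2 ≤ m)
    (hmX : (m : Cardinal) < Cardinal.mk X) (hmY : (m : Cardinal) < Cardinal.mk Y)
    (f : Fin (m + 1) → X) (g : Fin (m + 1) → Y)
    (hf : StrictMono f) (hg : StrictMono g) :
    ¬ InDec K (kanModule K m f g) {S : Set (X × Y) | IsIntervalSet S} ∧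
    ∀ (X' : Set X) (Y' : Set Y), Cardinal.mk X' ≤ m → Cardinal.mk Y' ≤ m →
      InDec K (restrictMod K (kanModule K m f g) (X' ×ˢ Y'))
        (restrictClass {S : Set (X × Y) | IsIntervalSet S} (X' ×ˢ Y')) := by
  constructor
  · exact part_one K m hm f g hf hg
  · intro X' Y' hX' _
    exact part_two K m f g hf hg X' Y' hX'
end

section
/- Let M be a pointwise finite-dimensional weakly exact persistence module over X×Y, and let R and R' be rectangles of X×Y. Then V⁺_R(k_{R'}) equals the interval module k_{R'∩R⁺} if R' σ R and is the zero module otherwise; and V⁻_R(k_{R'}) equals k_{R'∩R⁺} if R' σ̊ R and is the zero module otherwise. (Here k_{R'} is itself pfd and weakly exact, so its functorial filtration is defined.) -/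
open CategoryTheory

attribute [local instance 10000] Preorder.smallCategory

attribute [local instance] Classical.propDecidable

variable (K : Type) [Field K]

/-! ## Cuts, rectangles via cuts, and the functorial filtration -/

/-- A cut of a totally ordered set: a partition into a lower and an upper part. -/
structure Cut (X : Type) [LinearOrder X] where
  lower : Set X
  upper : Set X
  union_eq : lower ∪ upper = Set.univ
  lt : ∀ x ∈ lower, ∀ y ∈ upper, x < y

theorem Cut.mem_upper_of_le {X : Type} [LinearOrder X] (c : Cut X) {a b : X}
    (ha : a ∈ c.upper) (h : a ≤ b) : b ∈ c.upper := by
  have hb : b ∈ c.lower ∪ c.upper := by rw [c.union_eq]; trivial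
  rcases hb with hb | hb
  · exact absurd h (not_le.mpr (c.lt b hb a ha))
  · exact hb

theorem Cut.mem_lower_of_le {X : Type} [LinearOrder X] (c : Cut X) {a b : X}
    (hb : b ∈ c.lower) (h : a ≤ b) : a ∈ c.lower := by
  have hb' : a ∈ c.lower ∪ c.upper := by rw [c.union_eq]; trivial
  rcases hb' with hb' | hb'
  · exact hb'
  · exact absurd h (not_le.mpr (c.lt b hb a hb'))

/-- The rectangle `(l⁺ ∩ r⁻) × (b⁺ ∩ t⁻)` associated to four cuts. -/
def rectOf {X Y : Type} [LinearOrder X] [LinearOrder Y]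
    (l r : Cut X) (b t : Cut Y) : Set (X × Y) :=
  (l.upper ∩ r.lower) ×ˢ (b.upper ∩ t.lower)

theorem isConvex_rectOf {X Y : Type} [LinearOrder X] [LinearOrder Y]
    (l r : Cut X) (b t : Cut Y) : IsConvexSet (rectOf l r b t) := by
  rintro p s q hps hsq ⟨⟨hp1, hp2⟩, hp3, hp4⟩ ⟨⟨hq1, hq2⟩, hq3, hq4⟩
  exact ⟨⟨l.mem_upper_of_le hp1 hps.1, r.mem_lower_of_le hq2 hsq.1⟩,
    b.mem_upper_of_le hp3 hps.2, t.mem_lower_of_le hq4 hsq.2⟩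

/-- The upset `R⁺` of a subset of a poset. -/
def upsetOf {P : Type} [Preorder P] (R : Set P) : Set P := {u | ∃ s ∈ R, s ≤ u}

theorem isConvex_upsetOf {P : Type} [Preorder P] (R : Set P) : IsConvexSet (upsetOf R) := by
  rintro p s q hps _ ⟨w, hw, hwp⟩ _
  exact ⟨w, hw, hwp.trans hps⟩

theorem IsConvexSet.inter {P : Type} [Preorder P] {A B : Set P}
    (hA : IsConvexSet A) (hB : IsConvexSet B) : IsConvexSet (A ∩ B) := by
  rintro p s q hps hsq ⟨hpA, hpB⟩ ⟨hqA, hqB⟩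
  exact ⟨hA hps hsq hpA hqA, hB hps hsq hpB hqB⟩

variable {X Y : Type} [LinearOrder X] [LinearOrder Y]

/-- Horizontal image space `Im⁺_{l,u}`. -/
noncomputable def ImPlusH (M : PersistenceModule K (X × Y)) (l : Cut X) (u : X × Y) :
    Submodule K (M.obj u) :=
  ⨅ (x : X) (h : x ∈ l.upper ∧ x ≤ u.1),
    LinearMap.range (rho K M (show (x, u.2) ≤ u from ⟨h.2, le_rfl⟩))

/-- Horizontal image space `Im⁻_{l,u}`. -/
noncomputable def ImMinusH (M : PersistenceModule K (X × Y)) (l : Cut X) (u : X × Y) :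
    Submodule K (M.obj u) :=
  ⨆ (x : X) (h : x ∈ l.lower ∧ x ≤ u.1),
    LinearMap.range (rho K M (show (x, u.2) ≤ u from ⟨h.2, le_rfl⟩))

/-- Horizontal kernel space `Ker⁺_{r,u}`. -/
noncomputable def KerPlusH (M : PersistenceModule K (X × Y)) (r : Cut X) (u : X × Y) :
    Submodule K (M.obj u) :=
  ⨅ (x : X) (h : x ∈ r.upper ∧ u.1 ≤ x),
    LinearMap.ker (rho K M (show u ≤ (x, u.2) from ⟨h.2, le_rfl⟩))

/-- Horizontal kernel space `Ker⁻_{r,u}`. -/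
noncomputable def KerMinusH (M : PersistenceModule K (X × Y)) (r : Cut X) (u : X × Y) :
    Submodule K (M.obj u) :=
  ⨆ (x : X) (h : x ∈ r.lower ∧ u.1 ≤ x),
    LinearMap.ker (rho K M (show u ≤ (x, u.2) from ⟨h.2, le_rfl⟩))

/-- Vertical image space `Im⁺_{b,u}`. -/
noncomputable def ImPlusV (M : PersistenceModule K (X × Y)) (b : Cut Y) (u : X × Y) :
    Submodule K (M.obj u) :=
  ⨅ (y : Y) (h : y ∈ b.upper ∧ y ≤ u.2),
    LinearMap.range (rho K M (show (u.1, y) ≤ u from ⟨le_rfl, h.2⟩))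

/-- Vertical image space `Im⁻_{b,u}`. -/
noncomputable def ImMinusV (M : PersistenceModule K (X × Y)) (b : Cut Y) (u : X × Y) :
    Submodule K (M.obj u) :=
  ⨆ (y : Y) (h : y ∈ b.lower ∧ y ≤ u.2),
    LinearMap.range (rho K M (show (u.1, y) ≤ u from ⟨le_rfl, h.2⟩))

/-- Vertical kernel space `Ker⁺_{t,u}`. -/
noncomputable def KerPlusV (M : PersistenceModule K (X × Y)) (t : Cut Y) (u : X × Y) :
    Submodule K (M.obj u) :=
  ⨅ (y : Y) (h : y ∈ t.upper ∧ u.2 ≤ y),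
    LinearMap.ker (rho K M (show u ≤ (u.1, y) from ⟨le_rfl, h.2⟩))

/-- Vertical kernel space `Ker⁻_{t,u}`. -/
noncomputable def KerMinusV (M : PersistenceModule K (X × Y)) (t : Cut Y) (u : X × Y) :
    Submodule K (M.obj u) :=
  ⨆ (y : Y) (h : y ∈ t.lower ∧ u.2 ≤ y),
    LinearMap.ker (rho K M (show u ≤ (u.1, y) from ⟨le_rfl, h.2⟩))

/-- `Im⁺_{R,u}`. -/
noncomputable def ImPlusR (M : PersistenceModule K (X × Y)) (l : Cut X) (b : Cut Y)
    (u : X × Y) : Submodule K (M.obj u) :=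
  ImPlusH K M l u ⊓ ImPlusV K M b u

/-- `Im⁻_{R,u}`. -/
noncomputable def ImMinusR (M : PersistenceModule K (X × Y)) (l : Cut X) (b : Cut Y)
    (u : X × Y) : Submodule K (M.obj u) :=
  (ImMinusH K M l u ⊔ ImMinusV K M b u) ⊓ ImPlusR K M l b u

/-- `Ker⁺_{R,u}`. -/
noncomputable def KerPlusR (M : PersistenceModule K (X × Y)) (r : Cut X) (t : Cut Y)
    (u : X × Y) : Submodule K (M.obj u) :=
  (KerPlusH K M r u ⊔ KerMinusV K M t u) ⊓ (KerMinusH K M r u ⊔ KerPlusV K M t u)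

/-- `Ker⁻_{R,u}`. -/
noncomputable def KerMinusR (M : PersistenceModule K (X × Y)) (r : Cut X) (t : Cut Y)
    (u : X × Y) : Submodule K (M.obj u) :=
  KerMinusH K M r u ⊔ KerMinusV K M t u

/-- The pointwise functorial filtration `V⁺_{R,u}(M)` (meaningful for `u ∈ R`). -/
noncomputable def VplusAt (M : PersistenceModule K (X × Y)) (l r : Cut X) (b t : Cut Y)
    (u : X × Y) : Submodule K (M.obj u) :=
  ImPlusR K M l b u ⊓ KerPlusR K M r t u

/-- The pointwise functorial filtration `V⁻_{R,u}(M)` (meaningful for `u ∈ R`). -/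
noncomputable def VminusAt (M : PersistenceModule K (X × Y)) (l r : Cut X) (b t : Cut Y)
    (u : X × Y) : Submodule K (M.obj u) :=
  ImPlusR K M l b u ⊓ KerMinusR K M r t u ⊔ ImMinusR K M l b u ⊓ KerPlusR K M r t u

/-- The extension of `V⁺_R(M)` to a family of subspaces over all of `X × Y`
(equal to `⋃_{s ∈ R, s ≤ u} ρ_s^u(V⁺_{R,s})` on the upset of `R` and `0` elsewhere). -/
noncomputable def VplusSub (M : PersistenceModule K (X × Y)) (l r : Cut X) (b t : Cut Y)
    (u : X × Y) : Submodule K (M.obj u) :=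
  ⨆ (s : X × Y) (h : s ∈ rectOf l r b t ∧ s ≤ u),
    Submodule.map (rho K M h.2) (VplusAt K M l r b t s)

/-- The extension of `V⁻_R(M)` to a family of subspaces over all of `X × Y`. -/
noncomputable def VminusSub (M : PersistenceModule K (X × Y)) (l r : Cut X) (b t : Cut Y)
    (u : X × Y) : Submodule K (M.obj u) :=
  ⨆ (s : X × Y) (h : s ∈ rectOf l r b t ∧ s ≤ u),
    Submodule.map (rho K M h.2) (VminusAt K M l r b t s)

theorem rho_comp {P : Type} [Preorder P] (M : PersistenceModule K P) {p q r : P}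
    (h1 : p ≤ q) (h2 : q ≤ r) :
    (rho K M h2).comp (rho K M h1) = rho K M (h1.trans h2) := by
  rw [rho, rho, rho, ← homOfLE_comp h1 h2, M.map_comp]
  rfl

/-- The subfunctor of a persistence module determined by a compatible family of subspaces. -/
noncomputable def subfunctor {P : Type} [Preorder P] (M : PersistenceModule K P)
    (S : ∀ p, Submodule K (M.obj p))
    (hS : ∀ (p q : P) (h : p ≤ q), (S p).map (rho K M h) ≤ S q) :
    PersistenceModule K P where
  obj p := ModuleCat.of K ↥(S p)
  map {p q} f :=
    ModuleCat.ofHom ((rho K M (leOfHom f)).restrict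
      (p := S p) (q := S q) (fun x hx => hS p q (leOfHom f) ⟨x, hx, rfl⟩))
  map_id p := by
    refine ModuleCat.hom_ext (LinearMap.ext fun x => Subtype.ext ?_)
    show (M.map (𝟙 p)).hom x.1 = x.1
    rw [M.map_id]
    rfl
  map_comp {p q r} f g := by
    refine ModuleCat.hom_ext (LinearMap.ext fun x => Subtype.ext ?_)
    show (M.map (homOfLE ((leOfHom f).trans (leOfHom g)))).hom x.1 =
      (M.map (homOfLE (leOfHom g))).hom ((M.map (homOfLE (leOfHom f))).hom x.1)
    rw [← homOfLE_comp (leOfHom f) (leOfHom g), M.map_comp]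
    rfl

theorem vplusSub_mapsTo (M : PersistenceModule K (X × Y)) (l r : Cut X) (b t : Cut Y) :
    ∀ (p q : X × Y) (h : p ≤ q),
      Submodule.map (rho K M h) (VplusSub K M l r b t p) ≤ VplusSub K M l r b t q := by
  intro p q h
  rw [VplusSub, Submodule.map_iSup]
  refine iSup_le fun s => ?_
  rw [Submodule.map_iSup]
  refine iSup_le fun hs => ?_
  rw [← Submodule.map_comp, rho_comp K M hs.2 h]
  exact le_iSup_of_le s (le_iSup_of_le ⟨hs.1, hs.2.trans h⟩ le_rfl)

theorem vminusSub_mapsTo (M : PersistenceModule K (X × Y)) (l r : Cut X) (b t : Cut Y) :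
    ∀ (p q : X × Y) (h : p ≤ q),
      Submodule.map (rho K M h) (VminusSub K M l r b t p) ≤ VminusSub K M l r b t q := by
  intro p q h
  rw [VminusSub, Submodule.map_iSup]
  refine iSup_le fun s => ?_
  rw [Submodule.map_iSup]
  refine iSup_le fun hs => ?_
  rw [← Submodule.map_comp, rho_comp K M hs.2 h]
  exact le_iSup_of_le s (le_iSup_of_le ⟨hs.1, hs.2.trans h⟩ le_rfl)

/-- The submodule `V⁺_R(M)` of `M`, as a persistence module. -/
noncomputable def VplusMod (M : PersistenceModule K (X × Y)) (l r : Cut X) (b t : Cut Y) :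
    PersistenceModule K (X × Y) :=
  subfunctor K M (VplusSub K M l r b t) (vplusSub_mapsTo K M l r b t)

/-- The submodule `V⁻_R(M)` of `M`, as a persistence module. -/
noncomputable def VminusMod (M : PersistenceModule K (X × Y)) (l r : Cut X) (b t : Cut Y) :
    PersistenceModule K (X × Y) :=
  subfunctor K M (VminusSub K M l r b t) (vminusSub_mapsTo K M l r b t)

/-- The relation `R' σ R` on rectangles, expressed on cut decompositions. -/
def SigmaRel (l' r' : Cut X) (b' t' : Cut Y) (l r : Cut X) (b t : Cut Y) : Prop :=
  l'.lower ⊆ l.lower ∧ b'.lower ⊆ b.lower ∧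
    (r'.lower ⊂ r.lower ∨ t'.lower ⊂ t.lower ∨
      (r'.lower ⊆ r.lower ∧ t'.lower ⊆ t.lower))

/-- The relation `R' σ̊ R`: `R' σ R` and `R' ≠ R`. -/
def SigmaRelStrict (l' r' : Cut X) (b' t' : Cut Y) (l r : Cut X) (b t : Cut Y) : Prop :=
  SigmaRel l' r' b' t' l r b t ∧ rectOf l' r' b' t' ≠ rectOf l r b t

/-- The interval (indicator) module of a single convex set. -/
noncomputable abbrev singleIntervalModule {P : Type} [Preorder P] (S : Set P)
    (hS : IsConvexSet S) : PersistenceModule K P :=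
  intervalDirectSum K (fun _ : PUnit => S) (fun _ => hS)

section Aux

variable {K : Type} [Field K]

section Single
variable {P : Type} [Preorder P] {S : Set P} {hS : IsConvexSet S}

theorem single_obj_subsingleton {u : P} (hu : u ∉ S) :
    Subsingleton ((singleIntervalModule K S hS).obj u) := by
  have : IsEmpty {i : PUnit // u ∈ (fun _ : PUnit => S) i} := ⟨fun i => hu i.2⟩
  exact inferInstanceAs (Subsingleton ({i : PUnit // u ∈ (fun _ : PUnit => S) i} → K))

theorem submod_eq_bot_of_not_mem {u : P} (hu : u ∉ S)
    (N : Submodule K ((singleIntervalModule K S hS).obj u)) : N = ⊥ := by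
  have := single_obj_subsingleton (K := K) (hS := hS) hu
  have : Subsingleton (Submodule K ((singleIntervalModule K S hS).obj u)) :=
    Submodule.subsingleton_iff K |>.mpr this
  exact Subsingleton.elim _ _

theorem single_rho_apply {s t : P} (h : s ≤ t) (v : (singleIntervalModule K S hS).obj s)
    (j : {i : PUnit // t ∈ (fun _ : PUnit => S) i}) :
    rho K (singleIntervalModule K S hS) h v j =
      if hs : s ∈ S then v ⟨PUnit.unit, hs⟩ else 0 := by
  show ((if hs : s ∈ S then
      LinearMap.proj (⟨PUnit.unit, hs⟩ : {i : PUnit // s ∈ (fun _ : PUnit => S) i}) else 0 :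
        ({i : PUnit // s ∈ (fun _ : PUnit => S) i} → K) →ₗ[K] K)) v = _
  by_cases hs : s ∈ S
  · rw [dif_pos hs, dif_pos hs]; rfl
  · rw [dif_neg hs, dif_neg hs]; rfl

theorem single_rho_eq_zero {s t : P} (h : s ≤ t) (hs : s ∉ S) :
    rho K (singleIntervalModule K S hS) h = 0 := by
  refine LinearMap.ext fun v => funext fun j => ?_
  rw [single_rho_apply, dif_neg hs]; rfl

theorem single_rho_bijective {s t : P} (h : s ≤ t) (hs : s ∈ S) (ht : t ∈ S) :
    Function.Bijective (rho K (singleIntervalModule K S hS) h) := by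
  constructor
  · intro v w hvw
    funext j
    have h1 : rho K (singleIntervalModule K S hS) h v ⟨PUnit.unit, ht⟩ =
        rho K (singleIntervalModule K S hS) h w ⟨PUnit.unit, ht⟩ := congrFun hvw _
    rw [single_rho_apply, single_rho_apply, dif_pos hs, dif_pos hs] at h1
    have : j = ⟨PUnit.unit, hs⟩ := Subtype.ext (Subsingleton.elim _ _)
    rw [this]; exact h1
  · intro w
    refine ⟨fun _ => w ⟨PUnit.unit, ht⟩, funext fun j => ?_⟩
    exact (single_rho_apply h _ j).trans (dif_pos hs)

theorem single_rho_range {s t : P} (h : s ≤ t) (hs : s ∈ S) (ht : t ∈ S) :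
    LinearMap.range (rho K (singleIntervalModule K S hS) h) = ⊤ :=
  LinearMap.range_eq_top.mpr (single_rho_bijective h hs ht).2

theorem single_rho_ker {s t : P} (h : s ≤ t) (hs : s ∈ S) (ht : t ∈ S) :
    LinearMap.ker (rho K (singleIntervalModule K S hS) h) = ⊥ :=
  LinearMap.ker_eq_bot.mpr (single_rho_bijective h hs ht).1

theorem single_rho_range_bot {s t : P} (h : s ≤ t) (hs : s ∉ S) :
    LinearMap.range (rho K (singleIntervalModule K S hS) h) = ⊥ := by
  rw [single_rho_eq_zero h hs, LinearMap.range_zero]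

theorem single_rho_ker_top {s t : P} (h : s ≤ t) (ht : t ∉ S) :
    LinearMap.ker (rho K (singleIntervalModule K S hS) h) = ⊤ := by
  have := single_obj_subsingleton (K := K) (hS := hS) ht
  refine LinearMap.ker_eq_top.mpr (LinearMap.ext fun v => Subsingleton.elim _ _)

theorem single_submod_bot_or_top {u : P} (hu : u ∈ S)
    (N : Submodule K ((singleIntervalModule K S hS).obj u)) : N = ⊥ ∨ N = ⊤ := by
  by_cases hN : N = ⊥
  · exact Or.inl hN
  right
  obtain ⟨v, hvN, hv0⟩ := Submodule.exists_mem_ne_zero_of_ne_bot hN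
  have hidx : ∀ j : {i : PUnit // u ∈ (fun _ : PUnit => S) i},
      j = ⟨PUnit.unit, hu⟩ := fun j => Subtype.ext (Subsingleton.elim _ _)
  have hc : v ⟨PUnit.unit, hu⟩ ≠ 0 := by
    intro h0
    exact hv0 (funext fun j => by rw [hidx j]; exact h0)
  rw [eq_top_iff]
  intro w _
  have hw : w = (w ⟨PUnit.unit, hu⟩ * (v ⟨PUnit.unit, hu⟩)⁻¹) • v := by
    funext j
    rw [hidx j]
    show w _ = (w ⟨PUnit.unit, hu⟩ * (v ⟨PUnit.unit, hu⟩)⁻¹) * v ⟨PUnit.unit, hu⟩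
    field_simp
  rw [hw]
  exact N.smul_mem _ hvN

end Single
end Aux
section Cuts
variable {Z : Type} [LinearOrder Z]

theorem Cut.not_mem_upper {c : Cut Z} {x : Z} (hx : x ∈ c.lower) : x ∉ c.upper :=
  fun h => lt_irrefl x (c.lt x hx x h)

theorem Cut.not_mem_lower {c : Cut Z} {x : Z} (hx : x ∈ c.upper) : x ∉ c.lower :=
  fun h => lt_irrefl x (c.lt x h x hx)

theorem Cut.mem_upper_of_not_lower {c : Cut Z} {x : Z} (hx : x ∉ c.lower) : x ∈ c.upper := by
  have h : x ∈ c.lower ∪ c.upper := by rw [c.union_eq]; trivial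
  exact h.resolve_left hx

theorem Cut.mem_lower_of_not_upper {c : Cut Z} {x : Z} (hx : x ∉ c.upper) : x ∈ c.lower := by
  have h : x ∈ c.lower ∪ c.upper := by rw [c.union_eq]; trivial
  exact h.resolve_right hx

/-- Lower sets of two cuts are comparable. -/
theorem Cut.lower_comparable (c d : Cut Z) : c.lower ⊆ d.lower ∨ d.lower ⊆ c.lower := by
  by_cases h : c.lower ⊆ d.lower
  · exact Or.inl h
  right
  obtain ⟨x, hxc, hxd⟩ := Set.not_subset.mp h
  intro y hy
  exact c.mem_lower_of_le hxc (le_of_lt (d.lt y hy x (Cut.mem_upper_of_not_lower hxd)))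

theorem Cut.upper_subset_of_lower_subset {c d : Cut Z} (h : c.lower ⊆ d.lower) :
    d.upper ⊆ c.upper := fun x hx =>
  Cut.mem_upper_of_not_lower (fun hc => Cut.not_mem_lower hx (h hc))

theorem Cut.upper_eq_compl (c : Cut Z) : c.upper = c.lowerᶜ := by
  ext x
  constructor
  · exact fun h => Cut.not_mem_lower h
  · exact fun h => Cut.mem_upper_of_not_lower h

theorem Cut.eq_of_lower_eq {c d : Cut Z} (h : c.lower = d.lower) : c.upper = d.upper := by
  rw [Cut.upper_eq_compl, Cut.upper_eq_compl, h]

end Cuts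

section Rect
variable {X Y : Type} [LinearOrder X] [LinearOrder Y]

theorem mem_rectOf {l r : Cut X} {b t : Cut Y} {u : X × Y} :
    u ∈ rectOf l r b t ↔
      (u.1 ∈ l.upper ∧ u.1 ∈ r.lower) ∧ u.2 ∈ b.upper ∧ u.2 ∈ t.lower := by
  rfl

theorem rectOf_eq_of_lower_eq {l r l₂ r₂ : Cut X} {b t b₂ t₂ : Cut Y}
    (hl : l.lower = l₂.lower) (hr : r.lower = r₂.lower)
    (hb : b.lower = b₂.lower) (ht : t.lower = t₂.lower) :
    rectOf l r b t = rectOf l₂ r₂ b₂ t₂ := by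
  unfold rectOf
  rw [Cut.eq_of_lower_eq hl, Cut.eq_of_lower_eq hb, hr, ht]

/-- If two rectangles given by cuts are equal and have a common point,
the corresponding lower sets agree (stated as the four needed inclusions). -/
theorem lower_subsets_of_rect_eq {l' r' l : Cut X} {b' t' b : Cut Y} {r : Cut X} {t : Cut Y}
    {u : X × Y} (heq : rectOf l' r' b' t' = rectOf l r b t)
    (hu : u ∈ rectOf l' r' b' t') :
    l.lower ⊆ l'.lower ∧ r.lower ⊆ r'.lower ∧ b.lower ⊆ b'.lower ∧ t.lower ⊆ t'.lower := by
  have hu' : u ∈ rectOf l r b t := heq ▸ hu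
  rw [mem_rectOf] at hu hu'
  refine ⟨fun x hx => ?_, fun x hx => ?_, fun y hy => ?_, fun y hy => ?_⟩
  · by_contra hx'
    have hxu : x ∈ l'.upper := Cut.mem_upper_of_not_lower hx'
    have hxr : x ∈ r'.lower := r'.mem_lower_of_le hu.1.2 (le_of_lt (l.lt x hx u.1 hu'.1.1))
    have : (x, u.2) ∈ rectOf l r b t := by
      rw [← heq, mem_rectOf]; exact ⟨⟨hxu, hxr⟩, hu.2⟩
    exact Cut.not_mem_upper hx (mem_rectOf.mp this).1.1
  · by_contra hx'
    have hxu : x ∈ r'.upper := Cut.mem_upper_of_not_lower hx'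
    have hlt : u.1 ≤ x := le_of_lt (r'.lt u.1 hu.1.2 x hxu)
    have : (x, u.2) ∈ rectOf l' r' b' t' := by
      rw [heq, mem_rectOf]
      exact ⟨⟨l.mem_upper_of_le hu'.1.1 hlt, hx⟩, hu'.2.1, hu'.2.2⟩
    exact Cut.not_mem_lower hxu (mem_rectOf.mp this).1.2
  · by_contra hy'
    have hyu : y ∈ b'.upper := Cut.mem_upper_of_not_lower hy'
    have hyt : y ∈ t'.lower := t'.mem_lower_of_le hu.2.2 (le_of_lt (b.lt y hy u.2 hu'.2.1))
    have : (u.1, y) ∈ rectOf l r b t := by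
      rw [← heq, mem_rectOf]; exact ⟨⟨hu.1.1, hu.1.2⟩, hyu, hyt⟩
    exact Cut.not_mem_upper hy (mem_rectOf.mp this).2.1
  · by_contra hy'
    have hyu : y ∈ t'.upper := Cut.mem_upper_of_not_lower hy'
    have hlt : u.2 ≤ y := le_of_lt (t'.lt u.2 hu.2.2 y hyu)
    have : (u.1, y) ∈ rectOf l' r' b' t' := by
      rw [heq, mem_rectOf]
      exact ⟨⟨hu'.1.1, hu'.1.2⟩, b.mem_upper_of_le hu'.2.1 hlt, hy⟩
    exact Cut.not_mem_lower hyu (mem_rectOf.mp this).2.2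

end Rect
section HV
variable {K : Type} [Field K] {X Y : Type} [LinearOrder X] [LinearOrder Y]

/-- The rectangle module `k_{R'}`. -/
noncomputable abbrev rectMod (K : Type) [Field K] {X Y : Type} [LinearOrder X] [LinearOrder Y]
    (l' r' : Cut X) (b' t' : Cut Y) : PersistenceModule K (X × Y) :=
  singleIntervalModule K (rectOf l' r' b' t') (isConvex_rectOf l' r' b' t')

variable {l' r' : Cut X} {b' t' : Cut Y} {l r : Cut X} {b t : Cut Y} {u : X × Y}

theorem ImPlusH_top (hu' : u ∈ rectOf l' r' b' t') (h : l'.lower ⊆ l.lower) :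
    ImPlusH K (rectMod K l' r' b' t') l u = ⊤ := by
  rw [mem_rectOf] at hu'
  rw [ImPlusH]
  refine iInf_eq_top.mpr fun x => iInf_eq_top.mpr fun hx => ?_
  refine single_rho_range _ (mem_rectOf.mpr ⟨⟨?_, r'.mem_lower_of_le hu'.1.2 hx.2⟩, hu'.2⟩)
    (mem_rectOf.mpr hu')
  exact Cut.mem_upper_of_not_lower fun hc => Cut.not_mem_upper (h hc) hx.1

theorem ImPlusH_bot (hu' : u ∈ rectOf l' r' b' t') (h : ¬ l'.lower ⊆ l.lower) :
    ImPlusH K (rectMod K l' r' b' t') l u = ⊥ := by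
  rw [mem_rectOf] at hu'
  obtain ⟨x₀, hx1, hx2⟩ := Set.not_subset.mp h
  have hxu : x₀ ∈ l.upper := Cut.mem_upper_of_not_lower hx2
  have hle : x₀ ≤ u.1 := le_of_lt (l'.lt x₀ hx1 u.1 hu'.1.1)
  refine le_bot_iff.mp ?_
  refine le_trans (iInf_le _ x₀) (le_trans (iInf_le _ ⟨hxu, hle⟩) ?_)
  refine le_of_eq (single_rho_range_bot _ fun hc => ?_)
  exact Cut.not_mem_upper hx1 (mem_rectOf.mp hc).1.1

theorem ImMinusH_top (hu' : u ∈ rectOf l' r' b' t') (hu : u ∈ rectOf l r b t)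
    (h : ¬ l.lower ⊆ l'.lower) :
    ImMinusH K (rectMod K l' r' b' t') l u = ⊤ := by
  rw [mem_rectOf] at hu' hu
  obtain ⟨x₀, hx1, hx2⟩ := Set.not_subset.mp h
  have hle : x₀ ≤ u.1 := le_of_lt (l.lt x₀ hx1 u.1 hu.1.1)
  refine top_le_iff.mp (le_trans ?_ (le_iSup_of_le x₀ (le_iSup_of_le ⟨hx1, hle⟩ le_rfl)))
  have hm : ((x₀, u.2) : X × Y) ∈ rectOf l' r' b' t' := mem_rectOf.mpr
    ⟨⟨Cut.mem_upper_of_not_lower hx2, r'.mem_lower_of_le hu'.1.2 hle⟩, hu'.2⟩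
  exact (single_rho_range (K := K) (show ((x₀, u.2) : X × Y) ≤ u from ⟨hle, le_rfl⟩) hm
    (mem_rectOf.mpr hu')).ge

theorem ImMinusH_bot (hu' : u ∈ rectOf l' r' b' t') (h : l.lower ⊆ l'.lower) :
    ImMinusH K (rectMod K l' r' b' t') l u = ⊥ := by
  refine le_bot_iff.mp (iSup_le fun x => iSup_le fun hx => ?_)
  refine le_of_eq (single_rho_range_bot _ fun hc => ?_)
  exact Cut.not_mem_upper (h hx.1) (mem_rectOf.mp hc).1.1

theorem KerPlusH_top (hu' : u ∈ rectOf l' r' b' t') (h : r'.lower ⊆ r.lower) :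
    KerPlusH K (rectMod K l' r' b' t') r u = ⊤ := by
  refine iInf_eq_top.mpr fun x => iInf_eq_top.mpr fun hx => ?_
  refine single_rho_ker_top _ fun hc => ?_
  exact Cut.not_mem_upper (h (mem_rectOf.mp hc).1.2) hx.1

theorem KerPlusH_bot (hu' : u ∈ rectOf l' r' b' t') (hu : u ∈ rectOf l r b t)
    (h : ¬ r'.lower ⊆ r.lower) :
    KerPlusH K (rectMod K l' r' b' t') r u = ⊥ := by
  rw [mem_rectOf] at hu' hu
  obtain ⟨x₀, hx1, hx2⟩ := Set.not_subset.mp h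
  have hxu : x₀ ∈ r.upper := Cut.mem_upper_of_not_lower hx2
  have hle : u.1 ≤ x₀ := le_of_lt (r.lt u.1 hu.1.2 x₀ hxu)
  refine le_bot_iff.mp (le_trans (iInf_le _ x₀) (le_trans (iInf_le _ ⟨hxu, hle⟩) ?_))
  have hm : ((x₀, u.2) : X × Y) ∈ rectOf l' r' b' t' := mem_rectOf.mpr
    ⟨⟨l'.mem_upper_of_le hu'.1.1 hle, hx1⟩, hu'.2⟩
  exact (single_rho_ker (K := K) (show u ≤ ((x₀, u.2) : X × Y) from ⟨hle, le_rfl⟩)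
    (mem_rectOf.mpr hu') hm).le

theorem KerMinusH_top (hu' : u ∈ rectOf l' r' b' t') (h : ¬ r.lower ⊆ r'.lower) :
    KerMinusH K (rectMod K l' r' b' t') r u = ⊤ := by
  rw [mem_rectOf] at hu'
  obtain ⟨x₀, hx1, hx2⟩ := Set.not_subset.mp h
  have hxu : x₀ ∈ r'.upper := Cut.mem_upper_of_not_lower hx2
  have hle : u.1 ≤ x₀ := le_of_lt (r'.lt u.1 hu'.1.2 x₀ hxu)
  refine top_le_iff.mp (le_trans ?_ (le_iSup_of_le x₀ (le_iSup_of_le ⟨hx1, hle⟩ le_rfl)))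
  exact (single_rho_ker_top (K := K) (show u ≤ ((x₀, u.2) : X × Y) from ⟨hle, le_rfl⟩)
    fun hc => Cut.not_mem_lower hxu (mem_rectOf.mp hc).1.2).ge

theorem KerMinusH_bot (hu' : u ∈ rectOf l' r' b' t') (h : r.lower ⊆ r'.lower) :
    KerMinusH K (rectMod K l' r' b' t') r u = ⊥ := by
  rw [mem_rectOf] at hu'
  refine le_bot_iff.mp (iSup_le fun x => iSup_le fun hx => ?_)
  have hm : ((x, u.2) : X × Y) ∈ rectOf l' r' b' t' := mem_rectOf.mpr
    ⟨⟨l'.mem_upper_of_le hu'.1.1 hx.2, h hx.1⟩, hu'.2⟩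
  exact (single_rho_ker (K := K) (show u ≤ ((x, u.2) : X × Y) from ⟨hx.2, le_rfl⟩)
    (mem_rectOf.mpr hu') hm).le

theorem ImPlusV_top (hu' : u ∈ rectOf l' r' b' t') (h : b'.lower ⊆ b.lower) :
    ImPlusV K (rectMod K l' r' b' t') b u = ⊤ := by
  rw [mem_rectOf] at hu'
  refine iInf_eq_top.mpr fun y => iInf_eq_top.mpr fun hy => ?_
  refine single_rho_range _ (mem_rectOf.mpr ⟨hu'.1, ?_, t'.mem_lower_of_le hu'.2.2 hy.2⟩)
    (mem_rectOf.mpr hu')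
  exact Cut.mem_upper_of_not_lower fun hc => Cut.not_mem_upper (h hc) hy.1

theorem ImPlusV_bot (hu' : u ∈ rectOf l' r' b' t') (h : ¬ b'.lower ⊆ b.lower) :
    ImPlusV K (rectMod K l' r' b' t') b u = ⊥ := by
  rw [mem_rectOf] at hu'
  obtain ⟨y₀, hy1, hy2⟩ := Set.not_subset.mp h
  have hyu : y₀ ∈ b.upper := Cut.mem_upper_of_not_lower hy2
  have hle : y₀ ≤ u.2 := le_of_lt (b'.lt y₀ hy1 u.2 hu'.2.1)
  refine le_bot_iff.mp (le_trans (iInf_le _ y₀) (le_trans (iInf_le _ ⟨hyu, hle⟩) ?_))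
  refine le_of_eq (single_rho_range_bot _ fun hc => ?_)
  exact Cut.not_mem_upper hy1 (mem_rectOf.mp hc).2.1

theorem ImMinusV_top (hu' : u ∈ rectOf l' r' b' t') (hu : u ∈ rectOf l r b t)
    (h : ¬ b.lower ⊆ b'.lower) :
    ImMinusV K (rectMod K l' r' b' t') b u = ⊤ := by
  rw [mem_rectOf] at hu' hu
  obtain ⟨y₀, hy1, hy2⟩ := Set.not_subset.mp h
  have hle : y₀ ≤ u.2 := le_of_lt (b.lt y₀ hy1 u.2 hu.2.1)
  refine top_le_iff.mp (le_trans ?_ (le_iSup_of_le y₀ (le_iSup_of_le ⟨hy1, hle⟩ le_rfl)))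
  have hm : ((u.1, y₀) : X × Y) ∈ rectOf l' r' b' t' := mem_rectOf.mpr
    ⟨hu'.1, Cut.mem_upper_of_not_lower hy2, t'.mem_lower_of_le hu'.2.2 hle⟩
  exact (single_rho_range (K := K) (show ((u.1, y₀) : X × Y) ≤ u from ⟨le_rfl, hle⟩) hm
    (mem_rectOf.mpr hu')).ge

theorem ImMinusV_bot (hu' : u ∈ rectOf l' r' b' t') (h : b.lower ⊆ b'.lower) :
    ImMinusV K (rectMod K l' r' b' t') b u = ⊥ := by
  refine le_bot_iff.mp (iSup_le fun y => iSup_le fun hy => ?_)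
  refine le_of_eq (single_rho_range_bot _ fun hc => ?_)
  exact Cut.not_mem_upper (h hy.1) (mem_rectOf.mp hc).2.1

theorem KerPlusV_top (hu' : u ∈ rectOf l' r' b' t') (h : t'.lower ⊆ t.lower) :
    KerPlusV K (rectMod K l' r' b' t') t u = ⊤ := by
  refine iInf_eq_top.mpr fun y => iInf_eq_top.mpr fun hy => ?_
  refine single_rho_ker_top _ fun hc => ?_
  exact Cut.not_mem_upper (h (mem_rectOf.mp hc).2.2) hy.1

theorem KerPlusV_bot (hu' : u ∈ rectOf l' r' b' t') (hu : u ∈ rectOf l r b t)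
    (h : ¬ t'.lower ⊆ t.lower) :
    KerPlusV K (rectMod K l' r' b' t') t u = ⊥ := by
  rw [mem_rectOf] at hu' hu
  obtain ⟨y₀, hy1, hy2⟩ := Set.not_subset.mp h
  have hyu : y₀ ∈ t.upper := Cut.mem_upper_of_not_lower hy2
  have hle : u.2 ≤ y₀ := le_of_lt (t.lt u.2 hu.2.2 y₀ hyu)
  refine le_bot_iff.mp (le_trans (iInf_le _ y₀) (le_trans (iInf_le _ ⟨hyu, hle⟩) ?_))
  have hm : ((u.1, y₀) : X × Y) ∈ rectOf l' r' b' t' := mem_rectOf.mpr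
    ⟨hu'.1, b'.mem_upper_of_le hu'.2.1 hle, hy1⟩
  exact (single_rho_ker (K := K) (show u ≤ ((u.1, y₀) : X × Y) from ⟨le_rfl, hle⟩)
    (mem_rectOf.mpr hu') hm).le

theorem KerMinusV_top (hu' : u ∈ rectOf l' r' b' t') (h : ¬ t.lower ⊆ t'.lower) :
    KerMinusV K (rectMod K l' r' b' t') t u = ⊤ := by
  rw [mem_rectOf] at hu'
  obtain ⟨y₀, hy1, hy2⟩ := Set.not_subset.mp h
  have hyu : y₀ ∈ t'.upper := Cut.mem_upper_of_not_lower hy2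
  have hle : u.2 ≤ y₀ := le_of_lt (t'.lt u.2 hu'.2.2 y₀ hyu)
  refine top_le_iff.mp (le_trans ?_ (le_iSup_of_le y₀ (le_iSup_of_le ⟨hy1, hle⟩ le_rfl)))
  exact (single_rho_ker_top (K := K) (show u ≤ ((u.1, y₀) : X × Y) from ⟨le_rfl, hle⟩)
    fun hc => Cut.not_mem_lower hyu (mem_rectOf.mp hc).2.2).ge

theorem KerMinusV_bot (hu' : u ∈ rectOf l' r' b' t') (h : t.lower ⊆ t'.lower) :
    KerMinusV K (rectMod K l' r' b' t') t u = ⊥ := by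
  rw [mem_rectOf] at hu'
  refine le_bot_iff.mp (iSup_le fun y => iSup_le fun hy => ?_)
  have hm : ((u.1, y) : X × Y) ∈ rectOf l' r' b' t' := mem_rectOf.mpr
    ⟨hu'.1, b'.mem_upper_of_le hu'.2.1 hy.2, h hy.1⟩
  exact (single_rho_ker (K := K) (show u ≤ ((u.1, y) : X × Y) from ⟨le_rfl, hy.2⟩)
    (mem_rectOf.mpr hu') hm).le

end HV
section VAt
variable {K : Type} [Field K] {X Y : Type} [LinearOrder X] [LinearOrder Y]
variable {l' r' : Cut X} {b' t' : Cut Y} {l r : Cut X} {b t : Cut Y} {u : X × Y}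

theorem vplusAt_top (hu' : u ∈ rectOf l' r' b' t') (hu : u ∈ rectOf l r b t)
    (hσ : SigmaRel l' r' b' t' l r b t) :
    VplusAt K (rectMod K l' r' b' t') l r b t u = ⊤ := by
  obtain ⟨hA1, hA3, hd⟩ := hσ
  have hfst : KerPlusH K (rectMod K l' r' b' t') r u ⊔
      KerMinusV K (rectMod K l' r' b' t') t u = ⊤ := by
    rcases hd with h | h | h
    · rw [KerPlusH_top hu' h.subset]; simp
    · rw [KerMinusV_top hu' (ssubset_iff_subset_not_subset.mp h).2]; simp
    · rw [KerPlusH_top hu' h.1]; simp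
  have hsnd : KerMinusH K (rectMod K l' r' b' t') r u ⊔
      KerPlusV K (rectMod K l' r' b' t') t u = ⊤ := by
    rcases hd with h | h | h
    · rw [KerMinusH_top hu' (ssubset_iff_subset_not_subset.mp h).2]; simp
    · rw [KerPlusV_top hu' h.subset]; simp
    · rw [KerPlusV_top hu' h.2]; simp
  rw [VplusAt, ImPlusR, KerPlusR, ImPlusH_top hu' hA1, ImPlusV_top hu' hA3, hfst, hsnd]
  simp

theorem vplusAt_bot (hu' : u ∈ rectOf l' r' b' t') (hu : u ∈ rectOf l r b t)
    (hσ : ¬ SigmaRel l' r' b' t' l r b t) :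
    VplusAt K (rectMod K l' r' b' t') l r b t u = ⊥ := by
  by_cases hA1 : l'.lower ⊆ l.lower
  swap
  · rw [VplusAt, ImPlusR, ImPlusH_bot hu' hA1]; simp
  by_cases hA3 : b'.lower ⊆ b.lower
  swap
  · rw [VplusAt, ImPlusR, ImPlusV_bot hu' hA3]; simp
  have hB2 : r.lower ⊆ r'.lower := by
    by_contra hc
    have hB1 : r'.lower ⊆ r.lower := (Cut.lower_comparable r' r).resolve_right hc
    exact hσ ⟨hA1, hA3, Or.inl (ssubset_iff_subset_not_subset.mpr ⟨hB1, hc⟩)⟩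
  have hB4 : t.lower ⊆ t'.lower := by
    by_contra hc
    have hB3 : t'.lower ⊆ t.lower := (Cut.lower_comparable t' t).resolve_right hc
    exact hσ ⟨hA1, hA3, Or.inr (Or.inl (ssubset_iff_subset_not_subset.mpr ⟨hB3, hc⟩))⟩
  have hB13 : ¬(r'.lower ⊆ r.lower ∧ t'.lower ⊆ t.lower) := fun hc =>
    hσ ⟨hA1, hA3, Or.inr (Or.inr hc)⟩
  rw [VplusAt, KerPlusR, KerMinusH_bot hu' hB2, KerMinusV_bot hu' hB4]
  rcases not_and_or.mp hB13 with h | h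
  · rw [KerPlusH_bot hu' hu h]; simp
  · rw [KerPlusV_bot hu' hu h]; simp

theorem vminusAt_top (hu' : u ∈ rectOf l' r' b' t') (hu : u ∈ rectOf l r b t)
    (hσs : SigmaRelStrict l' r' b' t' l r b t) :
    VminusAt K (rectMod K l' r' b' t') l r b t u = ⊤ := by
  obtain ⟨⟨hA1, hA3, hd⟩, hne⟩ := hσs
  have hIm : ImPlusR K (rectMod K l' r' b' t') l b u = ⊤ := by
    rw [ImPlusR, ImPlusH_top hu' hA1, ImPlusV_top hu' hA3]; simp
  by_cases hB2 : r.lower ⊆ r'.lower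
  swap
  · rw [VminusAt, KerMinusR, KerMinusH_top hu' hB2, hIm]; simp
  by_cases hB4 : t.lower ⊆ t'.lower
  swap
  · rw [VminusAt, KerMinusR, KerMinusV_top hu' hB4, hIm]; simp
  have hB13 : r'.lower ⊆ r.lower ∧ t'.lower ⊆ t.lower := by
    rcases hd with h | h | h
    · exact absurd hB2 (ssubset_iff_subset_not_subset.mp h).2
    · exact absurd hB4 (ssubset_iff_subset_not_subset.mp h).2
    · exact h
  have hA24 : ¬ l.lower ⊆ l'.lower ∨ ¬ b.lower ⊆ b'.lower := by
    by_contra hc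
    push_neg at hc
    exact hne (rectOf_eq_of_lower_eq (Set.Subset.antisymm hA1 hc.1)
      (Set.Subset.antisymm hB13.1 hB2) (Set.Subset.antisymm hA3 hc.2)
      (Set.Subset.antisymm hB13.2 hB4))
  have hImM : ImMinusR K (rectMod K l' r' b' t') l b u = ⊤ := by
    rw [ImMinusR, hIm]
    rcases hA24 with h | h
    · rw [ImMinusH_top hu' hu h]; simp
    · rw [ImMinusV_top hu' hu h]; simp
  have hKp : KerPlusR K (rectMod K l' r' b' t') r t u = ⊤ := by
    rw [KerPlusR, KerPlusH_top hu' hB13.1, KerPlusV_top hu' hB13.2]; simp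
  rw [VminusAt, hImM, hKp]
  simp

theorem vminusAt_bot (hu' : u ∈ rectOf l' r' b' t') (hu : u ∈ rectOf l r b t)
    (hσ : ¬ SigmaRelStrict l' r' b' t' l r b t) :
    VminusAt K (rectMod K l' r' b' t') l r b t u = ⊥ := by
  by_cases hA1 : l'.lower ⊆ l.lower
  swap
  · rw [VminusAt, ImMinusR, ImPlusR, ImPlusH_bot hu' hA1]; simp
  by_cases hA3 : b'.lower ⊆ b.lower
  swap
  · rw [VminusAt, ImMinusR, ImPlusR, ImPlusV_bot hu' hA3]; simp
  by_cases hσ0 : SigmaRel l' r' b' t' l r b t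
  · have heq : rectOf l' r' b' t' = rectOf l r b t := by
      by_contra hne
      exact hσ ⟨hσ0, hne⟩
    obtain ⟨h1, h2, h3, h4⟩ := lower_subsets_of_rect_eq heq hu'
    rw [VminusAt, KerMinusR, KerMinusH_bot hu' h2, KerMinusV_bot hu' h4, ImMinusR,
      ImMinusH_bot hu' h1, ImMinusV_bot hu' h3]
    simp
  · have hB2 : r.lower ⊆ r'.lower := by
      by_contra hc
      have hB1 : r'.lower ⊆ r.lower := (Cut.lower_comparable r' r).resolve_right hc
      exact hσ0 ⟨hA1, hA3, Or.inl (ssubset_iff_subset_not_subset.mpr ⟨hB1, hc⟩)⟩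
    have hB4 : t.lower ⊆ t'.lower := by
      by_contra hc
      have hB3 : t'.lower ⊆ t.lower := (Cut.lower_comparable t' t).resolve_right hc
      exact hσ0 ⟨hA1, hA3, Or.inr (Or.inl (ssubset_iff_subset_not_subset.mpr ⟨hB3, hc⟩))⟩
    have hB13 : ¬(r'.lower ⊆ r.lower ∧ t'.lower ⊆ t.lower) := fun hc =>
      hσ0 ⟨hA1, hA3, Or.inr (Or.inr hc)⟩
    rw [VminusAt, KerMinusR, KerPlusR, KerMinusH_bot hu' hB2, KerMinusV_bot hu' hB4]
    rcases not_and_or.mp hB13 with h | h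
    · rw [KerPlusH_bot hu' hu h]; simp
    · rw [KerPlusV_bot hu' hu h]; simp

end VAt
section Sub
variable {K : Type} [Field K] {X Y : Type} [LinearOrder X] [LinearOrder Y]
variable {l' r' : Cut X} {b' t' : Cut Y} {l r : Cut X} {b t : Cut Y} {u : X × Y}

theorem mem_rect'_of_sigma (hσ : SigmaRel l' r' b' t' l r b t) {s : X × Y}
    (hs : s ∈ rectOf l r b t) (hsu : s ≤ u) (hu' : u ∈ rectOf l' r' b' t') :
    s ∈ rectOf l' r' b' t' := by
  rw [mem_rectOf] at hs hu' ⊢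
  exact ⟨⟨Cut.upper_subset_of_lower_subset hσ.1 hs.1.1,
      r'.mem_lower_of_le hu'.1.2 hsu.1⟩,
    Cut.upper_subset_of_lower_subset hσ.2.1 hs.2.1,
    t'.mem_lower_of_le hu'.2.2 hsu.2⟩

theorem vplusSub_top (hσ : SigmaRel l' r' b' t' l r b t)
    (hu : u ∈ rectOf l' r' b' t' ∩ upsetOf (rectOf l r b t)) :
    VplusSub K (rectMod K l' r' b' t') l r b t u = ⊤ := by
  obtain ⟨hu', s, hsR, hsu⟩ := hu
  have hs' : s ∈ rectOf l' r' b' t' := mem_rect'_of_sigma hσ hsR hsu hu'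
  refine top_le_iff.mp (le_trans ?_ (le_iSup_of_le s (le_iSup_of_le ⟨hsR, hsu⟩ le_rfl)))
  rw [vplusAt_top hs' hsR hσ, Submodule.map_top]
  exact (single_rho_range (K := K) hsu hs' hu').ge

theorem vplusSub_bot_of_not_mem (hu : u ∉ rectOf l' r' b' t' ∩ upsetOf (rectOf l r b t)) :
    VplusSub K (rectMod K l' r' b' t') l r b t u = ⊥ := by
  rcases not_and_or.mp hu with hu1 | hu2
  · exact submod_eq_bot_of_not_mem hu1 _
  · refine le_bot_iff.mp (iSup_le fun s => iSup_le fun hs => ?_)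
    exact (hu2 ⟨s, hs.1, hs.2⟩).elim

theorem vplusSub_bot_of_not_sigma (hσ : ¬ SigmaRel l' r' b' t' l r b t) (u : X × Y) :
    VplusSub K (rectMod K l' r' b' t') l r b t u = ⊥ := by
  refine le_bot_iff.mp (iSup_le fun s => iSup_le fun hs => ?_)
  by_cases hs' : s ∈ rectOf l' r' b' t'
  · rw [vplusAt_bot hs' hs.1 hσ, Submodule.map_bot]
  · rw [show VplusAt K (rectMod K l' r' b' t') l r b t s = ⊥ from
      submod_eq_bot_of_not_mem hs' _, Submodule.map_bot]

theorem vminusSub_top (hσ : SigmaRelStrict l' r' b' t' l r b t)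
    (hu : u ∈ rectOf l' r' b' t' ∩ upsetOf (rectOf l r b t)) :
    VminusSub K (rectMod K l' r' b' t') l r b t u = ⊤ := by
  obtain ⟨hu', s, hsR, hsu⟩ := hu
  have hs' : s ∈ rectOf l' r' b' t' := mem_rect'_of_sigma hσ.1 hsR hsu hu'
  refine top_le_iff.mp (le_trans ?_ (le_iSup_of_le s (le_iSup_of_le ⟨hsR, hsu⟩ le_rfl)))
  rw [vminusAt_top hs' hsR hσ, Submodule.map_top]
  exact (single_rho_range (K := K) hsu hs' hu').ge

theorem vminusSub_bot_of_not_mem (hu : u ∉ rectOf l' r' b' t' ∩ upsetOf (rectOf l r b t)) :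
    VminusSub K (rectMod K l' r' b' t') l r b t u = ⊥ := by
  rcases not_and_or.mp hu with hu1 | hu2
  · exact submod_eq_bot_of_not_mem hu1 _
  · refine le_bot_iff.mp (iSup_le fun s => iSup_le fun hs => ?_)
    exact (hu2 ⟨s, hs.1, hs.2⟩).elim

theorem vminusSub_bot_of_not_sigma (hσ : ¬ SigmaRelStrict l' r' b' t' l r b t) (u : X × Y) :
    VminusSub K (rectMod K l' r' b' t') l r b t u = ⊥ := by
  refine le_bot_iff.mp (iSup_le fun s => iSup_le fun hs => ?_)
  by_cases hs' : s ∈ rectOf l' r' b' t'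
  · rw [vminusAt_bot hs' hs.1 hσ, Submodule.map_bot]
  · rw [show VminusAt K (rectMod K l' r' b' t') l r b t s = ⊥ from
      submod_eq_bot_of_not_mem hs' _, Submodule.map_bot]

theorem single_pfd {P : Type} [Preorder P] (S : Set P) (hS : IsConvexSet S) :
    Pfd K (singleIntervalModule K S hS) := fun p => by
  show FiniteDimensional K ({i : PUnit // p ∈ (fun _ : PUnit => S) i} → K)
  infer_instance

theorem rect_weaklyExact :
    WeaklyExact K (singleIntervalModule K (rectOf l' r' b' t') (isConvex_rectOf l' r' b' t')) := by
  intro s t h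
  constructor
  · by_cases ht : t ∈ rectOf l' r' b' t'
    · have hts := mem_rectOf.mp ht
      by_cases hs : s ∈ rectOf l' r' b' t'
      · have hss := mem_rectOf.mp hs
        have ha : ((t.1, s.2) : X × Y) ∈ rectOf l' r' b' t' := mem_rectOf.mpr ⟨hts.1, hss.2⟩
        have hb : ((s.1, t.2) : X × Y) ∈ rectOf l' r' b' t' := mem_rectOf.mpr ⟨hss.1, hts.2⟩
        rw [single_rho_range h hs ht, single_rho_range _ ha ht, single_rho_range _ hb ht]
        simp
      · have h1 : s.1 ∈ r'.lower := r'.mem_lower_of_le hts.1.2 h.1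
        have h2 : s.2 ∈ t'.lower := t'.mem_lower_of_le hts.2.2 h.2
        by_cases h3 : s.2 ∈ b'.upper
        · have h4 : s.1 ∈ l'.lower := Cut.mem_lower_of_not_upper fun hc =>
            hs (mem_rectOf.mpr ⟨⟨hc, h1⟩, h3, h2⟩)
          have hbnot : ((s.1, t.2) : X × Y) ∉ rectOf l' r' b' t' := fun hc =>
            Cut.not_mem_upper h4 (mem_rectOf.mp hc).1.1
          rw [single_rho_range_bot h hs, single_rho_range_bot _ hbnot]
          simp
        · have h4 : s.2 ∈ b'.lower := Cut.mem_lower_of_not_upper h3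
          have hanot : ((t.1, s.2) : X × Y) ∉ rectOf l' r' b' t' := fun hc =>
            Cut.not_mem_upper h4 (mem_rectOf.mp hc).2.1
          rw [single_rho_range_bot h hs, single_rho_range_bot _ hanot]
          simp
    · have h1 := single_obj_subsingleton (K := K) (hS := isConvex_rectOf l' r' b' t') ht
      have h2 : Subsingleton (Submodule K
          ((singleIntervalModule K (rectOf l' r' b' t') (isConvex_rectOf l' r' b' t')).obj t)) :=
        (Submodule.subsingleton_iff K).mpr h1
      exact Subsingleton.elim _ _
  · by_cases hs : s ∈ rectOf l' r' b' t'
    · have hss := mem_rectOf.mp hs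
      by_cases ht : t ∈ rectOf l' r' b' t'
      · have hts := mem_rectOf.mp ht
        have ha : ((t.1, s.2) : X × Y) ∈ rectOf l' r' b' t' := mem_rectOf.mpr ⟨hts.1, hss.2⟩
        have hb : ((s.1, t.2) : X × Y) ∈ rectOf l' r' b' t' := mem_rectOf.mpr ⟨hss.1, hts.2⟩
        rw [single_rho_ker h hs ht, single_rho_ker _ hs ha, single_rho_ker _ hs hb]
        simp
      · have h1 : t.1 ∈ l'.upper := l'.mem_upper_of_le hss.1.1 h.1
        have h2 : t.2 ∈ b'.upper := b'.mem_upper_of_le hss.2.1 h.2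
        by_cases h3 : t.1 ∈ r'.lower
        · have h4 : t.2 ∈ t'.upper := Cut.mem_upper_of_not_lower fun hc =>
            ht (mem_rectOf.mpr ⟨⟨h1, h3⟩, h2, hc⟩)
          have hbnot : ((s.1, t.2) : X × Y) ∉ rectOf l' r' b' t' := fun hc =>
            Cut.not_mem_lower h4 (mem_rectOf.mp hc).2.2
          rw [single_rho_ker_top h ht, single_rho_ker_top _ hbnot]
          simp
        · have h4 : t.1 ∈ r'.upper := Cut.mem_upper_of_not_lower h3
          have hanot : ((t.1, s.2) : X × Y) ∉ rectOf l' r' b' t' := fun hc =>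
            Cut.not_mem_lower h4 (mem_rectOf.mp hc).1.2
          rw [single_rho_ker_top h ht, single_rho_ker_top _ hanot]
          simp
    · have h1 := single_obj_subsingleton (K := K) (hS := isConvex_rectOf l' r' b' t') hs
      have h2 : Subsingleton (Submodule K
          ((singleIntervalModule K (rectOf l' r' b' t') (isConvex_rectOf l' r' b' t')).obj s)) :=
        (Submodule.subsingleton_iff K).mpr h1
      exact Subsingleton.elim _ _

end Sub

/-- **Statement 6.** The functorial filtration of a rectangle module `k_{R'}` associated to a
rectangle `R`: `V⁺_R(k_{R'}) = k_{R'∩R⁺}` if `R' σ R` and `0` otherwise, and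
`V⁻_R(k_{R'}) = k_{R'∩R⁺}` if `R' σ̊ R` and `0` otherwise. -/
theorem filtration_of_rectangle_module
    (K : Type) [Field K] (X Y : Type) [LinearOrder X] [LinearOrder Y]
    (l' r' : Cut X) (b' t' : Cut Y) (l r : Cut X) (b t : Cut Y)
    (M : PersistenceModule K (X × Y))
    (hMdef : M = singleIntervalModule K (rectOf l' r' b' t') (isConvex_rectOf l' r' b' t')) :
    Pfd K M ∧ WeaklyExact K M ∧
    ∀ u : X × Y,
      (SigmaRel l' r' b' t' l r b t →
        (u ∈ rectOf l' r' b' t' ∩ upsetOf (rectOf l r b t) →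
          VplusSub K M l r b t u = ⊤) ∧
        (u ∉ rectOf l' r' b' t' ∩ upsetOf (rectOf l r b t) →
          VplusSub K M l r b t u = ⊥)) ∧
      (¬ SigmaRel l' r' b' t' l r b t → VplusSub K M l r b t u = ⊥) ∧
      (SigmaRelStrict l' r' b' t' l r b t →
        (u ∈ rectOf l' r' b' t' ∩ upsetOf (rectOf l r b t) →
          VminusSub K M l r b t u = ⊤) ∧
        (u ∉ rectOf l' r' b' t' ∩ upsetOf (rectOf l r b t) →
          VminusSub K M l r b t u = ⊥)) ∧
      (¬ SigmaRelStrict l' r' b' t' l r b t → VminusSub K M l r b t u = ⊥) := by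
  subst hMdef
  refine ⟨single_pfd _ _, rect_weaklyExact, fun u => ⟨fun hσ => ⟨fun hu => ?_, fun hu => ?_⟩,
    fun hσ => ?_, fun hσ => ⟨fun hu => ?_, fun hu => ?_⟩, fun hσ => ?_⟩⟩
  · exact vplusSub_top hσ hu
  · exact vplusSub_bot_of_not_mem hu
  · exact vplusSub_bot_of_not_sigma hσ u
  · exact vminusSub_top hσ hu
  · exact vminusSub_bot_of_not_mem hu
  · exact vminusSub_bot_of_not_sigma hσ u
end

section
/- Let M be a pointwise finite-dimensional weakly exact persistence module over X×Y and R a rectangle of X×Y. Then the submodule V⁺_R(M) of M (with the restricted internal maps) is itself a weakly exact persistence module. -/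
open CategoryTheory

attribute [local instance 10000] Preorder.smallCategory

attribute [local instance] Classical.propDecidable

variable (K : Type) [Field K]

variable {X Y : Type} [LinearOrder X] [LinearOrder Y]

/-! ### Auxiliary development for Statement 9 -/

section Basic
variable {K : Type} [Field K]

theorem rho_rho {P : Type} [Preorder P] (M : PersistenceModule K P) {p q r : P}
    (h1 : p ≤ q) (h2 : q ≤ r) (x : M.obj p) :
    rho K M h2 (rho K M h1 x) = rho K M (h1.trans h2) x := by
  rw [← rho_comp K M h1 h2]; rfl

variable {X Y : Type} [LinearOrder X] [LinearOrder Y] (M : PersistenceModule K (X × Y))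

theorem attain_ImPlusH (hM : Pfd K M) (cl : Cut X) (u : X × Y) (hu : u.1 ∈ cl.upper) :
    ∃ c, ∃ _ : c ∈ cl.upper, ∃ hcu : c ≤ u.1, ∀ x, ∀ _ : x ∈ cl.upper, ∀ hxc : x ≤ c,
      ImPlusH K M cl u =
        LinearMap.range (rho K M (show (x, u.2) ≤ u from ⟨hxc.trans hcu, le_rfl⟩)) := by
  haveI := hM u
  set S : Set ℕ := {n | ∃ x, ∃ _ : x ∈ cl.upper, ∃ hxu : x ≤ u.1,
    n = Module.finrank K (LinearMap.range (rho K M (show (x, u.2) ≤ u from ⟨hxu, le_rfl⟩)))}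
    with hSdef
  have hS : S.Nonempty := ⟨_, u.1, hu, le_rfl, rfl⟩
  obtain ⟨c, hc, hcu, hrank⟩ := Nat.sInf_mem hS
  -- monotonicity of ranges
  have hmono : ∀ x x' : X, ∀ hxu : x ≤ u.1, ∀ hx'u : x' ≤ u.1, x ≤ x' →
      LinearMap.range (rho K M (show (x, u.2) ≤ u from ⟨hxu, le_rfl⟩)) ≤
      LinearMap.range (rho K M (show (x', u.2) ≤ u from ⟨hx'u, le_rfl⟩)) := by
    intro x x' hxu hx'u hxx'
    rintro _ ⟨y, rfl⟩
    exact ⟨rho K M (show (x, u.2) ≤ (x', u.2) from ⟨hxx', le_rfl⟩) y,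
      rho_rho M (show (x, u.2) ≤ (x', u.2) from ⟨hxx', le_rfl⟩)
        (show (x', u.2) ≤ u from ⟨hx'u, le_rfl⟩) y⟩
  -- any index point has range ⊇ range at c
  have heq : ∀ x', ∀ _ : x' ∈ cl.upper, ∀ hx'u : x' ≤ u.1,
      LinearMap.range (rho K M (show (c, u.2) ≤ u from ⟨hcu, le_rfl⟩)) ≤
      LinearMap.range (rho K M (show (x', u.2) ≤ u from ⟨hx'u, le_rfl⟩)) := by
    intro x' hx' hx'u
    rcases le_total c x' with h | h
    · exact hmono c x' hcu hx'u h
    · have h1 := hmono x' c hx'u hcu h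
      have h2 : sInf S ≤ Module.finrank K
          (LinearMap.range (rho K M (show (x', u.2) ≤ u from ⟨hx'u, le_rfl⟩))) :=
        Nat.sInf_le ⟨x', hx', hx'u, rfl⟩
      exact (Submodule.eq_of_le_of_finrank_le h1 (hrank ▸ h2)).ge
  refine ⟨c, hc, hcu, fun x hx hxc => ?_⟩
  have hxu : x ≤ u.1 := hxc.trans hcu
  have hxeq : LinearMap.range (rho K M (show (x, u.2) ≤ u from ⟨hxu, le_rfl⟩)) =
      LinearMap.range (rho K M (show (c, u.2) ≤ u from ⟨hcu, le_rfl⟩)) :=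
    le_antisymm (hmono x c hxu hcu hxc) (heq x hx hxu)
  apply le_antisymm
  · exact (iInf_le _ x).trans (iInf_le _ ⟨hx, hxu⟩)
  · refine le_iInf fun x' => le_iInf fun hx' => ?_
    exact hxeq.trans_le (heq x' hx'.1 hx'.2)

theorem attain_ImPlusV (hM : Pfd K M) (cb : Cut Y) (u : X × Y) (hu : u.2 ∈ cb.upper) :
    ∃ c, ∃ _ : c ∈ cb.upper, ∃ hcu : c ≤ u.2, ∀ y, ∀ _ : y ∈ cb.upper, ∀ hyc : y ≤ c,
      ImPlusV K M cb u =
        LinearMap.range (rho K M (show (u.1, y) ≤ u from ⟨le_rfl, hyc.trans hcu⟩)) := by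
  haveI := hM u
  set S : Set ℕ := {n | ∃ y, ∃ _ : y ∈ cb.upper, ∃ hyu : y ≤ u.2,
    n = Module.finrank K (LinearMap.range (rho K M (show (u.1, y) ≤ u from ⟨le_rfl, hyu⟩)))}
    with hSdef
  have hS : S.Nonempty := ⟨_, u.2, hu, le_rfl, rfl⟩
  obtain ⟨c, hc, hcu, hrank⟩ := Nat.sInf_mem hS
  have hmono : ∀ y y' : Y, ∀ hyu : y ≤ u.2, ∀ hy'u : y' ≤ u.2, y ≤ y' →
      LinearMap.range (rho K M (show (u.1, y) ≤ u from ⟨le_rfl, hyu⟩)) ≤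
      LinearMap.range (rho K M (show (u.1, y') ≤ u from ⟨le_rfl, hy'u⟩)) := by
    intro y y' hyu hy'u hyy'
    rintro _ ⟨z, rfl⟩
    exact ⟨rho K M (show (u.1, y) ≤ (u.1, y') from ⟨le_rfl, hyy'⟩) z,
      rho_rho M (show (u.1, y) ≤ (u.1, y') from ⟨le_rfl, hyy'⟩)
        (show (u.1, y') ≤ u from ⟨le_rfl, hy'u⟩) z⟩
  have heq : ∀ y', ∀ _ : y' ∈ cb.upper, ∀ hy'u : y' ≤ u.2,
      LinearMap.range (rho K M (show (u.1, c) ≤ u from ⟨le_rfl, hcu⟩)) ≤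
      LinearMap.range (rho K M (show (u.1, y') ≤ u from ⟨le_rfl, hy'u⟩)) := by
    intro y' hy' hy'u
    rcases le_total c y' with h | h
    · exact hmono c y' hcu hy'u h
    · have h1 := hmono y' c hy'u hcu h
      have h2 : sInf S ≤ Module.finrank K
          (LinearMap.range (rho K M (show (u.1, y') ≤ u from ⟨le_rfl, hy'u⟩))) :=
        Nat.sInf_le ⟨y', hy', hy'u, rfl⟩
      exact (Submodule.eq_of_le_of_finrank_le h1 (hrank ▸ h2)).ge
  refine ⟨c, hc, hcu, fun y hy hyc => ?_⟩
  have hyu : y ≤ u.2 := hyc.trans hcu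
  have hyeq : LinearMap.range (rho K M (show (u.1, y) ≤ u from ⟨le_rfl, hyu⟩)) =
      LinearMap.range (rho K M (show (u.1, c) ≤ u from ⟨le_rfl, hcu⟩)) :=
    le_antisymm (hmono y c hyu hcu hyc) (heq y hy hyu)
  apply le_antisymm
  · exact (iInf_le _ y).trans (iInf_le _ ⟨hy, hyu⟩)
  · refine le_iInf fun y' => le_iInf fun hy' => ?_
    exact hyeq.trans_le (heq y' hy'.1 hy'.2)



theorem ker_rho_mono_H {u : X × Y} {x x' : X} (hux : u.1 ≤ x) (hux' : u.1 ≤ x') (h : x ≤ x') :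
    LinearMap.ker (rho K M (show u ≤ (x, u.2) from ⟨hux, le_rfl⟩)) ≤
    LinearMap.ker (rho K M (show u ≤ (x', u.2) from ⟨hux', le_rfl⟩)) := by
  intro z hz
  have := rho_rho M (show u ≤ (x, u.2) from ⟨hux, le_rfl⟩)
    (show (x, u.2) ≤ (x', u.2) from ⟨h, le_rfl⟩) z
  rw [LinearMap.mem_ker.1 hz, map_zero] at this
  exact LinearMap.mem_ker.2 this.symm

theorem ker_rho_mono_V {u : X × Y} {y y' : Y} (huy : u.2 ≤ y) (huy' : u.2 ≤ y') (h : y ≤ y') :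
    LinearMap.ker (rho K M (show u ≤ (u.1, y) from ⟨le_rfl, huy⟩)) ≤
    LinearMap.ker (rho K M (show u ≤ (u.1, y') from ⟨le_rfl, huy'⟩)) := by
  intro z hz
  have := rho_rho M (show u ≤ (u.1, y) from ⟨le_rfl, huy⟩)
    (show (u.1, y) ≤ (u.1, y') from ⟨le_rfl, h⟩) z
  rw [LinearMap.mem_ker.1 hz, map_zero] at this
  exact LinearMap.mem_ker.2 this.symm

theorem attain_KerPlusH (hM : Pfd K M) (cr : Cut X) (u : X × Y) (hu : u.1 ∈ cr.lower)
    {x₀ : X} (hx₀ : x₀ ∈ cr.upper) :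
    ∃ c, ∃ _ : c ∈ cr.upper, ∀ x, ∀ hx : x ∈ cr.upper, ∀ _ : x ≤ c,
      KerPlusH K M cr u =
        LinearMap.ker (rho K M (show u ≤ (x, u.2) from ⟨(cr.lt _ hu _ hx).le, le_rfl⟩)) := by
  haveI := hM u
  set S : Set ℕ := {n | ∃ x, ∃ hx : x ∈ cr.upper,
    n = Module.finrank K (LinearMap.ker
      (rho K M (show u ≤ (x, u.2) from ⟨(cr.lt _ hu _ hx).le, le_rfl⟩)))} with hSdef
  have hS : S.Nonempty := ⟨_, x₀, hx₀, rfl⟩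
  obtain ⟨c, hc, hrank⟩ := Nat.sInf_mem hS
  have heq : ∀ x', ∀ hx' : x' ∈ cr.upper,
      LinearMap.ker (rho K M (show u ≤ (c, u.2) from ⟨(cr.lt _ hu _ hc).le, le_rfl⟩)) ≤
      LinearMap.ker (rho K M (show u ≤ (x', u.2) from ⟨(cr.lt _ hu _ hx').le, le_rfl⟩)) := by
    intro x' hx'
    rcases le_total c x' with h | h
    · exact ker_rho_mono_H M (cr.lt _ hu _ hc).le (cr.lt _ hu _ hx').le h
    · have h1 := ker_rho_mono_H M (cr.lt _ hu _ hx').le (cr.lt _ hu _ hc).le h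
      have h2 : sInf S ≤ Module.finrank K (LinearMap.ker
          (rho K M (show u ≤ (x', u.2) from ⟨(cr.lt _ hu _ hx').le, le_rfl⟩))) :=
        Nat.sInf_le ⟨x', hx', rfl⟩
      exact (Submodule.eq_of_le_of_finrank_le h1 (hrank ▸ h2)).ge
  refine ⟨c, hc, fun x hx hxc => ?_⟩
  have hxeq : LinearMap.ker (rho K M (show u ≤ (x, u.2) from ⟨(cr.lt _ hu _ hx).le, le_rfl⟩)) =
      LinearMap.ker (rho K M (show u ≤ (c, u.2) from ⟨(cr.lt _ hu _ hc).le, le_rfl⟩)) :=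
    le_antisymm (ker_rho_mono_H M (cr.lt _ hu _ hx).le (cr.lt _ hu _ hc).le hxc) (heq x hx)
  apply le_antisymm
  · exact (iInf_le _ x).trans (iInf_le _ ⟨hx, (cr.lt _ hu _ hx).le⟩)
  · refine le_iInf fun x' => le_iInf fun hx' => ?_
    exact hxeq.trans_le (heq x' hx'.1)

theorem attain_KerPlusV (hM : Pfd K M) (ct : Cut Y) (u : X × Y) (hu : u.2 ∈ ct.lower)
    {y₀ : Y} (hy₀ : y₀ ∈ ct.upper) :
    ∃ c, ∃ _ : c ∈ ct.upper, ∀ y, ∀ hy : y ∈ ct.upper, ∀ _ : y ≤ c,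
      KerPlusV K M ct u =
        LinearMap.ker (rho K M (show u ≤ (u.1, y) from ⟨le_rfl, (ct.lt _ hu _ hy).le⟩)) := by
  haveI := hM u
  set S : Set ℕ := {n | ∃ y, ∃ hy : y ∈ ct.upper,
    n = Module.finrank K (LinearMap.ker
      (rho K M (show u ≤ (u.1, y) from ⟨le_rfl, (ct.lt _ hu _ hy).le⟩)))} with hSdef
  have hS : S.Nonempty := ⟨_, y₀, hy₀, rfl⟩
  obtain ⟨c, hc, hrank⟩ := Nat.sInf_mem hS
  have heq : ∀ y', ∀ hy' : y' ∈ ct.upper,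
      LinearMap.ker (rho K M (show u ≤ (u.1, c) from ⟨le_rfl, (ct.lt _ hu _ hc).le⟩)) ≤
      LinearMap.ker (rho K M (show u ≤ (u.1, y') from ⟨le_rfl, (ct.lt _ hu _ hy').le⟩)) := by
    intro y' hy'
    rcases le_total c y' with h | h
    · exact ker_rho_mono_V M (ct.lt _ hu _ hc).le (ct.lt _ hu _ hy').le h
    · have h1 := ker_rho_mono_V M (ct.lt _ hu _ hy').le (ct.lt _ hu _ hc).le h
      have h2 : sInf S ≤ Module.finrank K (LinearMap.ker
          (rho K M (show u ≤ (u.1, y') from ⟨le_rfl, (ct.lt _ hu _ hy').le⟩))) :=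
        Nat.sInf_le ⟨y', hy', rfl⟩
      exact (Submodule.eq_of_le_of_finrank_le h1 (hrank ▸ h2)).ge
  refine ⟨c, hc, fun y hy hyc => ?_⟩
  have hyeq : LinearMap.ker (rho K M (show u ≤ (u.1, y) from ⟨le_rfl, (ct.lt _ hu _ hy).le⟩)) =
      LinearMap.ker (rho K M (show u ≤ (u.1, c) from ⟨le_rfl, (ct.lt _ hu _ hc).le⟩)) :=
    le_antisymm (ker_rho_mono_V M (ct.lt _ hu _ hy).le (ct.lt _ hu _ hc).le hyc) (heq y hy)
  apply le_antisymm
  · exact (iInf_le _ y).trans (iInf_le _ ⟨hy, (ct.lt _ hu _ hy).le⟩)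
  · refine le_iInf fun y' => le_iInf fun hy' => ?_
    exact hyeq.trans_le (heq y' hy'.1)

theorem attain_KerMinusH (hM : Pfd K M) (cr : Cut X) (u : X × Y) (hu : u.1 ∈ cr.lower) :
    ∃ c, ∃ _ : c ∈ cr.lower, ∃ huc : u.1 ≤ c, ∀ x, ∀ _ : x ∈ cr.lower, ∀ hcx : c ≤ x,
      KerMinusH K M cr u =
        LinearMap.ker (rho K M (show u ≤ (x, u.2) from ⟨huc.trans hcx, le_rfl⟩)) := by
  haveI := hM u
  set S : Set ℕ := {n | ∃ x, ∃ _ : x ∈ cr.lower, ∃ hux : u.1 ≤ x,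
    n = Module.finrank K (LinearMap.ker
      (rho K M (show u ≤ (x, u.2) from ⟨hux, le_rfl⟩)))} with hSdef
  have hS : S.Nonempty := ⟨_, u.1, hu, le_rfl, rfl⟩
  have hbdd : BddAbove S := by
    refine ⟨Module.finrank K (M.obj u), ?_⟩
    rintro n ⟨x, hx, hux, rfl⟩
    exact Submodule.finrank_le _
  obtain ⟨c, hc, huc, hrank⟩ := Nat.sSup_mem hS hbdd
  have heq : ∀ x', ∀ _ : x' ∈ cr.lower, ∀ hux' : u.1 ≤ x',
      LinearMap.ker (rho K M (show u ≤ (x', u.2) from ⟨hux', le_rfl⟩)) ≤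
      LinearMap.ker (rho K M (show u ≤ (c, u.2) from ⟨huc, le_rfl⟩)) := by
    intro x' hx' hux'
    rcases le_total x' c with h | h
    · exact ker_rho_mono_H M hux' huc h
    · have h1 := ker_rho_mono_H M huc hux' h
      have h2 : Module.finrank K (LinearMap.ker
          (rho K M (show u ≤ (x', u.2) from ⟨hux', le_rfl⟩))) ≤ sSup S :=
        le_csSup hbdd ⟨x', hx', hux', rfl⟩
      exact (Submodule.eq_of_le_of_finrank_le h1 (hrank ▸ h2)).ge
  refine ⟨c, hc, huc, fun x hx hcx => ?_⟩
  have hux : u.1 ≤ x := huc.trans hcx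
  have hxeq : LinearMap.ker (rho K M (show u ≤ (x, u.2) from ⟨hux, le_rfl⟩)) =
      LinearMap.ker (rho K M (show u ≤ (c, u.2) from ⟨huc, le_rfl⟩)) :=
    le_antisymm (heq x hx hux) (ker_rho_mono_H M huc hux hcx)
  apply le_antisymm
  · refine iSup_le fun x' => iSup_le fun hx' => ?_
    exact (heq x' hx'.1 hx'.2).trans hxeq.ge
  · exact le_iSup_of_le x (le_iSup_of_le ⟨hx, hux⟩ le_rfl)

theorem attain_KerMinusV (hM : Pfd K M) (ct : Cut Y) (u : X × Y) (hu : u.2 ∈ ct.lower) :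
    ∃ c, ∃ _ : c ∈ ct.lower, ∃ huc : u.2 ≤ c, ∀ y, ∀ _ : y ∈ ct.lower, ∀ hcy : c ≤ y,
      KerMinusV K M ct u =
        LinearMap.ker (rho K M (show u ≤ (u.1, y) from ⟨le_rfl, huc.trans hcy⟩)) := by
  haveI := hM u
  set S : Set ℕ := {n | ∃ y, ∃ _ : y ∈ ct.lower, ∃ huy : u.2 ≤ y,
    n = Module.finrank K (LinearMap.ker
      (rho K M (show u ≤ (u.1, y) from ⟨le_rfl, huy⟩)))} with hSdef
  have hS : S.Nonempty := ⟨_, u.2, hu, le_rfl, rfl⟩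
  have hbdd : BddAbove S := by
    refine ⟨Module.finrank K (M.obj u), ?_⟩
    rintro n ⟨y, hy, huy, rfl⟩
    exact Submodule.finrank_le _
  obtain ⟨c, hc, huc, hrank⟩ := Nat.sSup_mem hS hbdd
  have heq : ∀ y', ∀ _ : y' ∈ ct.lower, ∀ huy' : u.2 ≤ y',
      LinearMap.ker (rho K M (show u ≤ (u.1, y') from ⟨le_rfl, huy'⟩)) ≤
      LinearMap.ker (rho K M (show u ≤ (u.1, c) from ⟨le_rfl, huc⟩)) := by
    intro y' hy' huy'
    rcases le_total y' c with h | h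
    · exact ker_rho_mono_V M huy' huc h
    · have h1 := ker_rho_mono_V M huc huy' h
      have h2 : Module.finrank K (LinearMap.ker
          (rho K M (show u ≤ (u.1, y') from ⟨le_rfl, huy'⟩))) ≤ sSup S :=
        le_csSup hbdd ⟨y', hy', huy', rfl⟩
      exact (Submodule.eq_of_le_of_finrank_le h1 (hrank ▸ h2)).ge
  refine ⟨c, hc, huc, fun y hy hcy => ?_⟩
  have huy : u.2 ≤ y := huc.trans hcy
  have hyeq : LinearMap.ker (rho K M (show u ≤ (u.1, y) from ⟨le_rfl, huy⟩)) =
      LinearMap.ker (rho K M (show u ≤ (u.1, c) from ⟨le_rfl, huc⟩)) :=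
    le_antisymm (heq y hy huy) (ker_rho_mono_V M huc huy hcy)
  apply le_antisymm
  · refine iSup_le fun y' => iSup_le fun hy' => ?_
    exact (heq y' hy'.1 hy'.2).trans hyeq.ge
  · exact le_iSup_of_le y (le_iSup_of_le ⟨hy, huy⟩ le_rfl)

theorem KerPlusH_eq_top (cr : Cut X) (u : X × Y) (h : ∀ x, x ∉ cr.upper) :
    KerPlusH K M cr u = ⊤ :=
  eq_top_iff.2 (le_iInf fun x => le_iInf fun hx => absurd hx.1 (h x))

theorem KerPlusV_eq_top (ct : Cut Y) (u : X × Y) (h : ∀ y, y ∉ ct.upper) :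
    KerPlusV K M ct u = ⊤ :=
  eq_top_iff.2 (le_iInf fun y => le_iInf fun hy => absurd hy.1 (h y))


theorem rho_rho' {P : Type} [Preorder P] (M : PersistenceModule K P) {p q r : P}
    (h1 : p ≤ q) (h2 : q ≤ r) (x : M.obj p) :
    rho K M h2 (rho K M h1 x) = rho K M (h1.trans h2) x := by
  rw [← rho_comp K M h1 h2]; rfl

variable {X Y : Type} [LinearOrder X] [LinearOrder Y] (M : PersistenceModule K (X × Y))

theorem map_ImPlusH (cl : Cut X) {z w : X × Y} (hzw : z ≤ w) :
    Submodule.map (rho K M hzw) (ImPlusH K M cl z) ≤ ImPlusH K M cl w := by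
  rintro _ ⟨v, hv, rfl⟩
  refine (Submodule.mem_iInf _).2 fun x => (Submodule.mem_iInf _).2 fun hx => ?_
  rcases le_total x z.1 with h | h
  · have hv' : v ∈ LinearMap.range (rho K M (show (x, z.2) ≤ z from ⟨h, le_rfl⟩)) :=
      (Submodule.mem_iInf _).1 ((Submodule.mem_iInf _).1 hv x) ⟨hx.1, h⟩
    obtain ⟨y, hy⟩ := hv'
    refine ⟨rho K M (show (x, z.2) ≤ (x, w.2) from ⟨le_rfl, hzw.2⟩) y, ?_⟩
    rw [rho_rho' M (show (x, z.2) ≤ (x, w.2) from ⟨le_rfl, hzw.2⟩)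
      (show (x, w.2) ≤ w from ⟨hx.2, le_rfl⟩) y, ← hy,
      rho_rho' M (show (x, z.2) ≤ z from ⟨h, le_rfl⟩) hzw y]
  · refine ⟨rho K M (show z ≤ (x, w.2) from ⟨h, hzw.2⟩) v, ?_⟩
    rw [rho_rho' M (show z ≤ (x, w.2) from ⟨h, hzw.2⟩) (show (x, w.2) ≤ w from ⟨hx.2, le_rfl⟩) v]

theorem map_ImPlusV (cb : Cut Y) {z w : X × Y} (hzw : z ≤ w) :
    Submodule.map (rho K M hzw) (ImPlusV K M cb z) ≤ ImPlusV K M cb w := by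
  rintro _ ⟨v, hv, rfl⟩
  refine (Submodule.mem_iInf _).2 fun y => (Submodule.mem_iInf _).2 fun hy => ?_
  rcases le_total y z.2 with h | h
  · have hv' : v ∈ LinearMap.range (rho K M (show (z.1, y) ≤ z from ⟨le_rfl, h⟩)) :=
      (Submodule.mem_iInf _).1 ((Submodule.mem_iInf _).1 hv y) ⟨hy.1, h⟩
    obtain ⟨u0, hu0⟩ := hv'
    refine ⟨rho K M (show (z.1, y) ≤ (w.1, y) from ⟨hzw.1, le_rfl⟩) u0, ?_⟩
    rw [rho_rho' M (show (z.1, y) ≤ (w.1, y) from ⟨hzw.1, le_rfl⟩)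
      (show (w.1, y) ≤ w from ⟨le_rfl, hy.2⟩) u0, ← hu0,
      rho_rho' M (show (z.1, y) ≤ z from ⟨le_rfl, h⟩) hzw u0]
  · refine ⟨rho K M (show z ≤ (w.1, y) from ⟨hzw.1, h⟩) v, ?_⟩
    rw [rho_rho' M (show z ≤ (w.1, y) from ⟨hzw.1, h⟩) (show (w.1, y) ≤ w from ⟨le_rfl, hy.2⟩) v]

theorem map_KerPlusH (cr : Cut X) {z w : X × Y} (hzw : z ≤ w) :
    Submodule.map (rho K M hzw) (KerPlusH K M cr z) ≤ KerPlusH K M cr w := by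
  rintro _ ⟨v, hv, rfl⟩
  refine (Submodule.mem_iInf _).2 fun x => (Submodule.mem_iInf _).2 fun hx => ?_
  have hz1x : z.1 ≤ x := hzw.1.trans hx.2
  have hv' : rho K M (show z ≤ (x, z.2) from ⟨hz1x, le_rfl⟩) v = 0 :=
    LinearMap.mem_ker.1 ((Submodule.mem_iInf _).1 ((Submodule.mem_iInf _).1 hv x) ⟨hx.1, hz1x⟩)
  refine LinearMap.mem_ker.2 ?_
  rw [rho_rho' M hzw (show w ≤ (x, w.2) from ⟨hx.2, le_rfl⟩) v,
    ← rho_rho' M (show z ≤ (x, z.2) from ⟨hz1x, le_rfl⟩)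
      (show (x, z.2) ≤ (x, w.2) from ⟨le_rfl, hzw.2⟩) v, hv', map_zero]

theorem map_KerPlusV (ct : Cut Y) {z w : X × Y} (hzw : z ≤ w) :
    Submodule.map (rho K M hzw) (KerPlusV K M ct z) ≤ KerPlusV K M ct w := by
  rintro _ ⟨v, hv, rfl⟩
  refine (Submodule.mem_iInf _).2 fun y => (Submodule.mem_iInf _).2 fun hy => ?_
  have hz2y : z.2 ≤ y := hzw.2.trans hy.2
  have hv' : rho K M (show z ≤ (z.1, y) from ⟨le_rfl, hz2y⟩) v = 0 :=
    LinearMap.mem_ker.1 ((Submodule.mem_iInf _).1 ((Submodule.mem_iInf _).1 hv y) ⟨hy.1, hz2y⟩)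
  refine LinearMap.mem_ker.2 ?_
  rw [rho_rho' M hzw (show w ≤ (w.1, y) from ⟨le_rfl, hy.2⟩) v,
    ← rho_rho' M (show z ≤ (z.1, y) from ⟨le_rfl, hz2y⟩)
      (show (z.1, y) ≤ (w.1, y) from ⟨hzw.1, le_rfl⟩) v, hv', map_zero]

theorem map_KerMinusH (cr : Cut X) {z w : X × Y} (hzw : z ≤ w) :
    Submodule.map (rho K M hzw) (KerMinusH K M cr z) ≤ KerMinusH K M cr w := by
  rw [KerMinusH, Submodule.map_iSup]
  refine iSup_le fun x => ?_
  rw [Submodule.map_iSup]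
  refine iSup_le fun hx => ?_
  rcases le_total w.1 x with h | h
  · have : Submodule.map (rho K M hzw)
        (LinearMap.ker (rho K M (show z ≤ (x, z.2) from ⟨hx.2, le_rfl⟩))) ≤
        LinearMap.ker (rho K M (show w ≤ (x, w.2) from ⟨h, le_rfl⟩)) := by
      rintro _ ⟨v, hv, rfl⟩
      refine LinearMap.mem_ker.2 ?_
      rw [rho_rho' M hzw (show w ≤ (x, w.2) from ⟨h, le_rfl⟩) v,
        ← rho_rho' M (show z ≤ (x, z.2) from ⟨hx.2, le_rfl⟩)
          (show (x, z.2) ≤ (x, w.2) from ⟨le_rfl, hzw.2⟩) v, LinearMap.mem_ker.1 hv, map_zero]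
    exact this.trans (le_iSup_of_le x (le_iSup_of_le ⟨hx.1, h⟩ le_rfl))
  · rintro _ ⟨v, hv, rfl⟩
    have : rho K M hzw v = 0 := by
      rw [← rho_rho' M (show z ≤ (x, z.2) from ⟨hx.2, le_rfl⟩)
        (show (x, z.2) ≤ w from ⟨h, hzw.2⟩) v, LinearMap.mem_ker.1 hv, map_zero]
    rw [this]
    exact zero_mem _

theorem map_KerMinusV (ct : Cut Y) {z w : X × Y} (hzw : z ≤ w) :
    Submodule.map (rho K M hzw) (KerMinusV K M ct z) ≤ KerMinusV K M ct w := by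
  rw [KerMinusV, Submodule.map_iSup]
  refine iSup_le fun y => ?_
  rw [Submodule.map_iSup]
  refine iSup_le fun hy => ?_
  rcases le_total w.2 y with h | h
  · have : Submodule.map (rho K M hzw)
        (LinearMap.ker (rho K M (show z ≤ (z.1, y) from ⟨le_rfl, hy.2⟩))) ≤
        LinearMap.ker (rho K M (show w ≤ (w.1, y) from ⟨le_rfl, h⟩)) := by
      rintro _ ⟨v, hv, rfl⟩
      refine LinearMap.mem_ker.2 ?_
      rw [rho_rho' M hzw (show w ≤ (w.1, y) from ⟨le_rfl, h⟩) v,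
        ← rho_rho' M (show z ≤ (z.1, y) from ⟨le_rfl, hy.2⟩)
          (show (z.1, y) ≤ (w.1, y) from ⟨hzw.1, le_rfl⟩) v, LinearMap.mem_ker.1 hv, map_zero]
    exact this.trans (le_iSup_of_le y (le_iSup_of_le ⟨hy.1, h⟩ le_rfl))
  · rintro _ ⟨v, hv, rfl⟩
    have : rho K M hzw v = 0 := by
      rw [← rho_rho' M (show z ≤ (z.1, y) from ⟨le_rfl, hy.2⟩)
        (show (z.1, y) ≤ w from ⟨hzw.1, h⟩) v, LinearMap.mem_ker.1 hv, map_zero]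
    rw [this]
    exact zero_mem _

theorem vplusAt_map_le' (cl cr : Cut X) (cb ct : Cut Y) {z w : X × Y} (hzw : z ≤ w) :
    Submodule.map (rho K M hzw) (VplusAt K M cl cr cb ct z) ≤ VplusAt K M cl cr cb ct w := by
  refine le_inf (le_inf ?_ ?_) (le_inf ?_ ?_)
  · exact (Submodule.map_mono (inf_le_left.trans inf_le_left)).trans (map_ImPlusH M cl hzw)
  · exact (Submodule.map_mono (inf_le_left.trans inf_le_right)).trans (map_ImPlusV M cb hzw)
  · refine le_trans (Submodule.map_mono (inf_le_right.trans inf_le_left)) ?_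
    rw [Submodule.map_sup]
    exact sup_le_sup (map_KerPlusH M cr hzw) (map_KerMinusV M ct hzw)
  · refine le_trans (Submodule.map_mono (inf_le_right.trans inf_le_right)) ?_
    rw [Submodule.map_sup]
    exact sup_le_sup (map_KerMinusH M cr hzw) (map_KerPlusV M ct hzw)


end Basic


theorem twoChainSplit {α : Type*} [Lattice α] [IsModularLattice α] {a a' a'' b b' b'' : α}
    (haa : a' ≤ a) (hbb : b' ≤ b)
    (ha1 : a'' ≤ a' ∨ a' ≤ a'') (ha2 : a'' ≤ a ∨ a ≤ a'')
    (hb1 : b'' ≤ b' ∨ b' ≤ b'') (hb2 : b'' ≤ b ∨ b ≤ b'') :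
    (a ⊔ b') ⊓ (a' ⊔ b) ⊓ (a'' ⊔ b'') ≤
      (a ⊔ b') ⊓ (a' ⊔ b) ⊓ a'' ⊔ (a ⊔ b') ⊓ (a' ⊔ b) ⊓ b'' := by
  set k := (a ⊔ b') ⊓ (a' ⊔ b) with hk
  have ha'k : a' ≤ k := le_inf (haa.trans le_sup_left) le_sup_left
  have hb'k : b' ≤ k := le_inf le_sup_right (hbb.trans le_sup_right)
  have habk : a ⊓ b ≤ k := le_inf (inf_le_left.trans le_sup_left) (inf_le_right.trans le_sup_right)
  rcases ha1 with ha1 | ha1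
  · -- a'' ≤ a' : modular trick
    have hak : a'' ≤ k := ha1.trans ha'k
    have : (a'' ⊔ b'') ⊓ k = a'' ⊔ b'' ⊓ k := sup_inf_assoc_of_le b'' hak
    calc k ⊓ (a'' ⊔ b'') = a'' ⊔ b'' ⊓ k := by rw [inf_comm]; exact this
    _ ≤ k ⊓ a'' ⊔ k ⊓ b'' :=
        sup_le_sup (le_inf hak le_rfl) (by rw [inf_comm])
  rcases hb1 with hb1 | hb1
  · have hbk : b'' ≤ k := hb1.trans hb'k
    have : (b'' ⊔ a'') ⊓ k = b'' ⊔ a'' ⊓ k := sup_inf_assoc_of_le a'' hbk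
    calc k ⊓ (a'' ⊔ b'') = b'' ⊔ a'' ⊓ k := by rw [inf_comm, sup_comm]; exact this
    _ ≤ k ⊓ a'' ⊔ k ⊓ b'' := by
        rw [sup_comm]
        exact sup_le_sup (by rw [inf_comm]) (le_inf hbk le_rfl)
  -- now a' ≤ a'', b' ≤ b''
  have hkk : k = a' ⊔ (b' ⊔ a ⊓ b) := by
    rw [hk, inf_comm, sup_inf_assoc_of_le b (haa.trans le_sup_left)]
    congr 1
    rw [inf_comm, sup_comm a b', sup_inf_assoc_of_le a hbb, inf_comm]
  rcases ha2 with ha2 | ha2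
  swap
  · -- a ≤ a''
    have : k ≤ k ⊓ a'' ⊔ k ⊓ b'' :=
      hkk.le.trans (sup_le (le_sup_of_le_left (le_inf ha'k ha1))
        (sup_le (le_sup_of_le_right (le_inf hb'k hb1))
          (le_sup_of_le_left (le_inf habk (inf_le_left.trans ha2)))))
    exact inf_le_left.trans this
  rcases hb2 with hb2 | hb2
  swap
  · -- b ≤ b''
    have : k ≤ k ⊓ a'' ⊔ k ⊓ b'' :=
      hkk.le.trans (sup_le (le_sup_of_le_left (le_inf ha'k ha1))
        (sup_le (le_sup_of_le_right (le_inf hb'k hb1))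
          (le_sup_of_le_right (le_inf habk (inf_le_right.trans hb2)))))
    exact inf_le_left.trans this
  -- middle/middle case : a' ≤ a'' ≤ a, b' ≤ b'' ≤ b
  have step1 : k ⊓ (a'' ⊔ b'') = (a' ⊔ b') ⊔ (a ⊓ b) ⊓ (a'' ⊔ b'') := by
    rw [hkk, ← sup_assoc, sup_inf_assoc_of_le (a ⊓ b) (sup_le_sup ha1 hb1)]
  have step2 : (a ⊓ b) ⊓ (a'' ⊔ b'') = b'' ⊓ a ⊔ a'' ⊓ b := by
    rw [inf_comm (a ⊓ b) _, ← inf_assoc, sup_inf_assoc_of_le b'' ha2,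
      sup_comm a'' (b'' ⊓ a), sup_inf_assoc_of_le a'' (inf_le_left.trans hb2)]
  rw [step1, step2]
  refine sup_le (sup_le (le_sup_of_le_left (le_inf ha'k ha1))
      (le_sup_of_le_right (le_inf hb'k hb1))) (sup_le ?_ ?_)
  · exact le_sup_of_le_right
      (le_inf ((inf_le_inf_right a hb2).trans ((inf_comm b a).trans_le habk)) inf_le_left)
  · exact le_sup_of_le_left (le_inf ((inf_le_inf_right b ha2).trans habk) inf_le_left)

section Main
variable {K : Type} [Field K] {X Y : Type} [LinearOrder X] [LinearOrder Y]
variable (M : PersistenceModule K (X × Y))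

theorem range_rho_le' {s t u : X × Y} (h1 : s ≤ t) (h2 : t ≤ u) :
    LinearMap.range (rho K M (h1.trans h2)) ≤ LinearMap.range (rho K M h2) := by
  rintro _ ⟨y, rfl⟩
  exact ⟨rho K M h1 y, rho_rho' M h1 h2 y⟩

theorem ker_rho_le' {s t u : X × Y} (h1 : s ≤ t) (h2 : t ≤ u) :
    LinearMap.ker (rho K M h1) ≤ LinearMap.ker (rho K M (h1.trans h2)) := by
  intro x hx
  have : rho K M h2 (rho K M h1 x) = 0 := by rw [LinearMap.mem_ker.1 hx, map_zero]
  rwa [rho_rho' M h1 h2 x] at this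

theorem kernelSplit (hM : Pfd K M) (hwe : WeaklyExact K M)
    (cl cr : Cut X) (cb ct : Cut Y) {w T : X × Y}
    (hw : w ∈ rectOf cl cr cb ct) (hwT : w ≤ T) :
    VplusAt K M cl cr cb ct w ⊓ LinearMap.ker (rho K M hwT) ≤
      (VplusAt K M cl cr cb ct w ⊓
        LinearMap.ker (rho K M (show w ≤ (T.1, w.2) from ⟨hwT.1, le_rfl⟩))) ⊔
      (VplusAt K M cl cr cb ct w ⊓
        LinearMap.ker (rho K M (show w ≤ (w.1, T.2) from ⟨le_rfl, hwT.2⟩))) := by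
  obtain ⟨⟨hw1l, hw1r⟩, hw2b, hw2t⟩ := hw
  obtain ⟨xl, hxl_up, hxl_le, hxl⟩ := attain_ImPlusH M hM cl w hw1l
  obtain ⟨yb, hyb_up, hyb_le, hyb⟩ := attain_ImPlusV M hM cb w hw2b
  obtain ⟨xr', hxr'_low, hxr'_ge, hxr'⟩ := attain_KerMinusH M hM cr w hw1r
  obtain ⟨yt', hyt'_low, hyt'_ge, hyt'⟩ := attain_KerMinusV M hM ct w hw2t
  set p : X × Y := (xl, yb) with hpdef
  have hpw : p ≤ w := ⟨hxl_le, hyb_le⟩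
  -- identification of Im⁺ as a single range
  have hImw : ImPlusR K M cl cb w = LinearMap.range (rho K M hpw) := by
    rw [ImPlusR, hxl xl hxl_up le_rfl, hyb yb hyb_up le_rfl, (hwe p w hpw).1, inf_comm]
  -- abbreviations for the kernel chains at p
  have hp1T : p.1 ≤ T.1 := hxl_le.trans hwT.1
  have hp2T : p.2 ≤ T.2 := hyb_le.trans hwT.2
  have hp1xr' : p.1 ≤ xr' := hxl_le.trans hxr'_ge
  have hp2yt' : p.2 ≤ yt' := hyb_le.trans hyt'_ge
  -- the horizontal package
  have packH : ∃ SH : Submodule K (M.obj p),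
      (LinearMap.ker (rho K M (show p ≤ (xr', p.2) from ⟨hp1xr', le_rfl⟩)) ≤ SH) ∧
      (LinearMap.ker (rho K M (show p ≤ (T.1, p.2) from ⟨hp1T, le_rfl⟩)) ≤ SH ∨
        SH ≤ LinearMap.ker (rho K M (show p ≤ (T.1, p.2) from ⟨hp1T, le_rfl⟩))) ∧
      (∀ v' : M.obj p, rho K M hpw v' ∈ KerPlusH K M cr w ⊔ KerMinusV K M ct w →
        v' ∈ SH ⊔ LinearMap.ker (rho K M (show p ≤ (p.1, yt') from ⟨le_rfl, hp2yt'⟩))) ∧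
      (∀ m ∈ SH ⊔ LinearMap.ker (rho K M (show p ≤ (p.1, yt') from ⟨le_rfl, hp2yt'⟩)),
        rho K M hpw m ∈ KerPlusH K M cr w ⊔ KerMinusV K M ct w) := by
    by_cases hrU : ∃ x, x ∈ cr.upper
    · obtain ⟨x₀, hx₀⟩ := hrU
      obtain ⟨xr, hxr_up, hxr⟩ := attain_KerPlusH M hM cr w hw1r hx₀
      have hw1xr : w.1 ≤ xr := (cr.lt _ hw1r _ hxr_up).le
      have hp1xr : p.1 ≤ xr := hxl_le.trans hw1xr
      have hxr'xr : xr' ≤ xr := (cr.lt _ hxr'_low _ hxr_up).le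
      set q1 : X × Y := (xr, yt') with hq1def
      have hwq1 : w ≤ q1 := ⟨hw1xr, hyt'_ge⟩
      have hpq1 : p ≤ q1 := hpw.trans hwq1
      have hker_q1_w : LinearMap.ker (rho K M hwq1) =
          LinearMap.ker (rho K M (show w ≤ (xr, w.2) from ⟨hw1xr, le_rfl⟩)) ⊔
          LinearMap.ker (rho K M (show w ≤ (w.1, yt') from ⟨le_rfl, hyt'_ge⟩)) :=
        (hwe w q1 hwq1).2
      have hker_q1_p : LinearMap.ker (rho K M hpq1) =
          LinearMap.ker (rho K M (show p ≤ (xr, p.2) from ⟨hp1xr, le_rfl⟩)) ⊔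
          LinearMap.ker (rho K M (show p ≤ (p.1, yt') from ⟨le_rfl, hp2yt'⟩)) :=
        (hwe p q1 hpq1).2
      refine ⟨LinearMap.ker (rho K M (show p ≤ (xr, p.2) from ⟨hp1xr, le_rfl⟩)),
        ker_rho_mono_H M hp1xr' hp1xr hxr'xr, ?_, ?_, ?_⟩
      · rcases le_total T.1 xr with h | h
        · exact Or.inl (ker_rho_mono_H M hp1T hp1xr h)
        · exact Or.inr (ker_rho_mono_H M hp1xr hp1T h)
      · intro v' hv'
        have hfac : KerPlusH K M cr w ⊔ KerMinusV K M ct w ≤ LinearMap.ker (rho K M hwq1) := by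
          refine sup_le ?_ ?_
          · refine le_trans ((iInf_le _ xr).trans (iInf_le _ ⟨hxr_up, hw1xr⟩)) ?_
            exact ker_rho_le' M (show w ≤ (xr, w.2) from ⟨hw1xr, le_rfl⟩)
              (show (xr, w.2) ≤ q1 from ⟨le_rfl, hyt'_ge⟩)
          · refine le_trans (hyt' yt' hyt'_low le_rfl).le ?_
            exact ker_rho_le' M (show w ≤ (w.1, yt') from ⟨le_rfl, hyt'_ge⟩)
              (show (w.1, yt') ≤ q1 from ⟨hw1xr, le_rfl⟩)
        have h0 : rho K M hpq1 v' = 0 := by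
          rw [← rho_rho' M hpw hwq1 v']
          exact LinearMap.mem_ker.1 (hfac hv')
        have := LinearMap.mem_ker.2 h0
        rwa [hker_q1_p] at this
      · intro m hm
        have h0 : rho K M hpq1 m = 0 := LinearMap.mem_ker.1 (hker_q1_p ▸ hm)
        have hm' : rho K M hpw m ∈ LinearMap.ker (rho K M hwq1) := by
          refine LinearMap.mem_ker.2 ?_
          rw [rho_rho' M hpw hwq1 m]
          exact h0
        rw [hker_q1_w] at hm'
        refine (sup_le_sup ?_ ?_ : _ ≤ KerPlusH K M cr w ⊔ KerMinusV K M ct w) hm'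
        · exact (hxr xr hxr_up le_rfl).ge
        · exact le_iSup_of_le yt' (le_iSup_of_le ⟨hyt'_low, hyt'_ge⟩ le_rfl)
    · push_neg at hrU
      have htop : KerPlusH K M cr w = ⊤ := KerPlusH_eq_top M cr w hrU
      refine ⟨⊤, le_top, Or.inl le_top, fun v' _ => Submodule.mem_sup_left trivial,
        fun m _ => ?_⟩
      rw [htop]
      exact Submodule.mem_sup_left trivial
  -- the vertical package
  have packV : ∃ SV : Submodule K (M.obj p),
      (LinearMap.ker (rho K M (show p ≤ (p.1, yt') from ⟨le_rfl, hp2yt'⟩)) ≤ SV) ∧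
      (LinearMap.ker (rho K M (show p ≤ (p.1, T.2) from ⟨le_rfl, hp2T⟩)) ≤ SV ∨
        SV ≤ LinearMap.ker (rho K M (show p ≤ (p.1, T.2) from ⟨le_rfl, hp2T⟩))) ∧
      (∀ v' : M.obj p, rho K M hpw v' ∈ KerMinusH K M cr w ⊔ KerPlusV K M ct w →
        v' ∈ LinearMap.ker (rho K M (show p ≤ (xr', p.2) from ⟨hp1xr', le_rfl⟩)) ⊔ SV) ∧
      (∀ m ∈ LinearMap.ker (rho K M (show p ≤ (xr', p.2) from ⟨hp1xr', le_rfl⟩)) ⊔ SV,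
        rho K M hpw m ∈ KerMinusH K M cr w ⊔ KerPlusV K M ct w) := by
    by_cases htU : ∃ y, y ∈ ct.upper
    · obtain ⟨y₀, hy₀⟩ := htU
      obtain ⟨yt, hyt_up, hyt⟩ := attain_KerPlusV M hM ct w hw2t hy₀
      have hw2yt : w.2 ≤ yt := (ct.lt _ hw2t _ hyt_up).le
      have hp2yt : p.2 ≤ yt := hyb_le.trans hw2yt
      have hyt'yt : yt' ≤ yt := (ct.lt _ hyt'_low _ hyt_up).le
      set q2 : X × Y := (xr', yt) with hq2def
      have hwq2 : w ≤ q2 := ⟨hxr'_ge, hw2yt⟩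
      have hpq2 : p ≤ q2 := hpw.trans hwq2
      have hker_q2_w : LinearMap.ker (rho K M hwq2) =
          LinearMap.ker (rho K M (show w ≤ (xr', w.2) from ⟨hxr'_ge, le_rfl⟩)) ⊔
          LinearMap.ker (rho K M (show w ≤ (w.1, yt) from ⟨le_rfl, hw2yt⟩)) :=
        (hwe w q2 hwq2).2
      have hker_q2_p : LinearMap.ker (rho K M hpq2) =
          LinearMap.ker (rho K M (show p ≤ (xr', p.2) from ⟨hp1xr', le_rfl⟩)) ⊔
          LinearMap.ker (rho K M (show p ≤ (p.1, yt) from ⟨le_rfl, hp2yt⟩)) :=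
        (hwe p q2 hpq2).2
      refine ⟨LinearMap.ker (rho K M (show p ≤ (p.1, yt) from ⟨le_rfl, hp2yt⟩)),
        ker_rho_mono_V M hp2yt' hp2yt hyt'yt, ?_, ?_, ?_⟩
      · rcases le_total T.2 yt with h | h
        · exact Or.inl (ker_rho_mono_V M hp2T hp2yt h)
        · exact Or.inr (ker_rho_mono_V M hp2yt hp2T h)
      · intro v' hv'
        have hfac : KerMinusH K M cr w ⊔ KerPlusV K M ct w ≤ LinearMap.ker (rho K M hwq2) := by
          refine sup_le ?_ ?_
          · refine le_trans (hxr' xr' hxr'_low le_rfl).le ?_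
            exact ker_rho_le' M (show w ≤ (xr', w.2) from ⟨hxr'_ge, le_rfl⟩)
              (show (xr', w.2) ≤ q2 from ⟨le_rfl, hw2yt⟩)
          · refine le_trans ((iInf_le _ yt).trans (iInf_le _ ⟨hyt_up, hw2yt⟩)) ?_
            exact ker_rho_le' M (show w ≤ (w.1, yt) from ⟨le_rfl, hw2yt⟩)
              (show (w.1, yt) ≤ q2 from ⟨hxr'_ge, le_rfl⟩)
        have h0 : rho K M hpq2 v' = 0 := by
          rw [← rho_rho' M hpw hwq2 v']
          exact LinearMap.mem_ker.1 (hfac hv')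
        have := LinearMap.mem_ker.2 h0
        rwa [hker_q2_p] at this
      · intro m hm
        have h0 : rho K M hpq2 m = 0 := LinearMap.mem_ker.1 (hker_q2_p ▸ hm)
        have hm' : rho K M hpw m ∈ LinearMap.ker (rho K M hwq2) := by
          refine LinearMap.mem_ker.2 ?_
          rw [rho_rho' M hpw hwq2 m]
          exact h0
        rw [hker_q2_w] at hm'
        refine (sup_le_sup ?_ ?_ : _ ≤ KerMinusH K M cr w ⊔ KerPlusV K M ct w) hm'
        · exact le_iSup_of_le xr' (le_iSup_of_le ⟨hxr'_low, hxr'_ge⟩ le_rfl)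
        · exact (hyt yt hyt_up le_rfl).ge
    · push_neg at htU
      have htop : KerPlusV K M ct w = ⊤ := KerPlusV_eq_top M ct w htU
      refine ⟨⊤, le_top, Or.inl le_top, fun v' _ => Submodule.mem_sup_right trivial,
        fun m _ => ?_⟩
      rw [htop]
      exact Submodule.mem_sup_right trivial
  obtain ⟨SH, hSH_a', hSH_cmp, hSH_fwd, hSH_bwd⟩ := packH
  obtain ⟨SV, hSV_b', hSV_cmp, hSV_fwd, hSV_bwd⟩ := packV
  -- main argument
  intro v hv
  obtain ⟨hvV, hvK⟩ := hv
  obtain ⟨hvIm, hvKer⟩ := hvV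
  have hvrange : v ∈ LinearMap.range (rho K M hpw) := hImw ▸ hvIm
  obtain ⟨vt, hvt⟩ := hvrange
  have h1 : vt ∈ SH ⊔ LinearMap.ker (rho K M (show p ≤ (p.1, yt') from ⟨le_rfl, hp2yt'⟩)) :=
    hSH_fwd vt (by rw [hvt]; exact hvKer.1)
  have h2 : vt ∈ LinearMap.ker (rho K M (show p ≤ (xr', p.2) from ⟨hp1xr', le_rfl⟩)) ⊔ SV :=
    hSV_fwd vt (by rw [hvt]; exact hvKer.2)
  have hpT : p ≤ T := hpw.trans hwT
  have h3 : vt ∈ LinearMap.ker (rho K M (show p ≤ (T.1, p.2) from ⟨hp1T, le_rfl⟩)) ⊔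
      LinearMap.ker (rho K M (show p ≤ (p.1, T.2) from ⟨le_rfl, hp2T⟩)) := by
    have h0 : rho K M hpT vt = 0 := by
      rw [← rho_rho' M hpw hwT vt, hvt]
      exact LinearMap.mem_ker.1 hvK
    have := LinearMap.mem_ker.2 h0
    rwa [(hwe p T hpT).2] at this
  have hcmpA : LinearMap.ker (rho K M (show p ≤ (T.1, p.2) from ⟨hp1T, le_rfl⟩)) ≤
      LinearMap.ker (rho K M (show p ≤ (xr', p.2) from ⟨hp1xr', le_rfl⟩)) ∨
      LinearMap.ker (rho K M (show p ≤ (xr', p.2) from ⟨hp1xr', le_rfl⟩)) ≤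
      LinearMap.ker (rho K M (show p ≤ (T.1, p.2) from ⟨hp1T, le_rfl⟩)) := by
    rcases le_total T.1 xr' with h | h
    · exact Or.inl (ker_rho_mono_H M hp1T hp1xr' h)
    · exact Or.inr (ker_rho_mono_H M hp1xr' hp1T h)
  have hcmpB : LinearMap.ker (rho K M (show p ≤ (p.1, T.2) from ⟨le_rfl, hp2T⟩)) ≤
      LinearMap.ker (rho K M (show p ≤ (p.1, yt') from ⟨le_rfl, hp2yt'⟩)) ∨
      LinearMap.ker (rho K M (show p ≤ (p.1, yt') from ⟨le_rfl, hp2yt'⟩)) ≤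
      LinearMap.ker (rho K M (show p ≤ (p.1, T.2) from ⟨le_rfl, hp2T⟩)) := by
    rcases le_total T.2 yt' with h | h
    · exact Or.inl (ker_rho_mono_V M hp2T hp2yt' h)
    · exact Or.inr (ker_rho_mono_V M hp2yt' hp2T h)
  have hsplit := twoChainSplit hSH_a' hSV_b' hcmpA (hSH_cmp.symm.imp id id).symm hcmpB
    (hSV_cmp.symm.imp id id).symm ⟨⟨h1, h2⟩, h3⟩
  obtain ⟨mt, hmt, nt, hnt, hmn⟩ := Submodule.mem_sup.1 hsplit
  refine Submodule.mem_sup.2 ⟨rho K M hpw mt, ⟨⟨?_, ?_⟩, ?_⟩, rho K M hpw nt, ⟨⟨?_, ?_⟩, ?_⟩, ?_⟩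
  · rw [hImw]; exact ⟨mt, rfl⟩
  · exact ⟨hSH_bwd mt hmt.1.1, hSV_bwd mt hmt.1.2⟩
  · refine LinearMap.mem_ker.2 ?_
    rw [rho_rho' M hpw (show w ≤ (T.1, w.2) from ⟨hwT.1, le_rfl⟩) mt,
      ← rho_rho' M (show p ≤ (T.1, p.2) from ⟨hp1T, le_rfl⟩)
        (show ((T.1 : X), p.2) ≤ (T.1, w.2) from ⟨le_rfl, hyb_le⟩) mt,
      LinearMap.mem_ker.1 hmt.2, map_zero]
  · rw [hImw]; exact ⟨nt, rfl⟩
  · exact ⟨hSH_bwd nt hnt.1.1, hSV_bwd nt hnt.1.2⟩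
  · refine LinearMap.mem_ker.2 ?_
    rw [rho_rho' M hpw (show w ≤ (w.1, T.2) from ⟨le_rfl, hwT.2⟩) nt,
      ← rho_rho' M (show p ≤ (p.1, T.2) from ⟨le_rfl, hp2T⟩)
        (show (p.1, (T.2 : Y)) ≤ (w.1, T.2) from ⟨hxl_le, le_rfl⟩) nt,
      LinearMap.mem_ker.1 hnt.2, map_zero]
  · rw [← map_add, hmn, hvt]

end Main

section Main2
variable {K : Type} [Field K] {X Y : Type} [LinearOrder X] [LinearOrder Y]
variable (M : PersistenceModule K (X × Y))

theorem range_rho_le'' {s t u : X × Y} (h1 : s ≤ t) (h2 : t ≤ u) :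
    LinearMap.range (rho K M (h1.trans h2)) ≤ LinearMap.range (rho K M h2) := by
  rintro _ ⟨y, rfl⟩
  exact ⟨rho K M h1 y, rho_rho' M h1 h2 y⟩

theorem ker_rho_le'' {s t u : X × Y} (h1 : s ≤ t) (h2 : t ≤ u) :
    LinearMap.ker (rho K M h1) ≤ LinearMap.ker (rho K M (h1.trans h2)) := by
  intro x hx
  have : rho K M h2 (rho K M h1 x) = 0 := by rw [LinearMap.mem_ker.1 hx, map_zero]
  rwa [rho_rho' M h1 h2 x] at this

theorem vplusAt_antitone (hM : Pfd K M) (hwe : WeaklyExact K M)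
    (cl cr : Cut X) (cb ct : Cut Y) {z w u : X × Y}
    (hz : z ∈ rectOf cl cr cb ct) (hw : w ∈ rectOf cl cr cb ct) (hzw : z ≤ w) (hwu : w ≤ u) :
    Submodule.map (rho K M hwu) (VplusAt K M cl cr cb ct w) ≤
      Submodule.map (rho K M (hzw.trans hwu)) (VplusAt K M cl cr cb ct z) := by
  obtain ⟨⟨hz1l, hz1r⟩, hz2b, hz2t⟩ := hz
  obtain ⟨⟨hw1l, hw1r⟩, hw2b, hw2t⟩ := hw
  -- combined attainment for ImPlusH at w and z
  obtain ⟨c1, hc1u, hc1le, hc1⟩ := attain_ImPlusH M hM cl w hw1l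
  obtain ⟨c2, hc2u, hc2le, hc2⟩ := attain_ImPlusH M hM cl z hz1l
  have hxlu : min c1 c2 ∈ cl.upper := by
    rcases le_total c1 c2 with h | h
    · rwa [min_eq_left h]
    · rwa [min_eq_right h]
  set xl := min c1 c2 with hxldef
  have hxl_w := hc1 xl hxlu (min_le_left _ _)
  have hxl_z := hc2 xl hxlu (min_le_right _ _)
  have hxl_le_z : xl ≤ z.1 := (min_le_right _ _).trans hc2le
  -- combined attainment for ImPlusV at w and z
  obtain ⟨d1, hd1u, hd1le, hd1⟩ := attain_ImPlusV M hM cb w hw2b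
  obtain ⟨d2, hd2u, hd2le, hd2⟩ := attain_ImPlusV M hM cb z hz2b
  have hybu : min d1 d2 ∈ cb.upper := by
    rcases le_total d1 d2 with h | h
    · rwa [min_eq_left h]
    · rwa [min_eq_right h]
  set yb := min d1 d2 with hybdef
  have hyb_w := hd1 yb hybu (min_le_left _ _)
  have hyb_z := hd2 yb hybu (min_le_right _ _)
  have hyb_le_z : yb ≤ z.2 := (min_le_right _ _).trans hd2le
  -- combined attainment for KerMinusH at w and z
  obtain ⟨e1, he1l, he1ge, he1⟩ := attain_KerMinusH M hM cr w hw1r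
  obtain ⟨e2, he2l, he2ge, he2⟩ := attain_KerMinusH M hM cr z hz1r
  have hxr'l : max e1 e2 ∈ cr.lower := by
    rcases le_total e1 e2 with h | h
    · rwa [max_eq_right h]
    · rwa [max_eq_left h]
  set xr' := max e1 e2 with hxr'def
  have hxr'_w := he1 xr' hxr'l (le_max_left _ _)
  have hxr'_z := he2 xr' hxr'l (le_max_right _ _)
  have hxr'_ge_w : w.1 ≤ xr' := he1ge.trans (le_max_left _ _)
  have hxr'_ge_z : z.1 ≤ xr' := hzw.1.trans hxr'_ge_w
  -- combined attainment for KerMinusV at w and z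
  obtain ⟨f1, hf1l, hf1ge, hf1⟩ := attain_KerMinusV M hM ct w hw2t
  obtain ⟨f2, hf2l, hf2ge, hf2⟩ := attain_KerMinusV M hM ct z hz2t
  have hyt'l : max f1 f2 ∈ ct.lower := by
    rcases le_total f1 f2 with h | h
    · rwa [max_eq_right h]
    · rwa [max_eq_left h]
  set yt' := max f1 f2 with hyt'def
  have hyt'_w := hf1 yt' hyt'l (le_max_left _ _)
  have hyt'_z := hf2 yt' hyt'l (le_max_right _ _)
  have hyt'_ge_w : w.2 ≤ yt' := hf1ge.trans (le_max_left _ _)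
  have hyt'_ge_z : z.2 ≤ yt' := hzw.2.trans hyt'_ge_w
  -- base point
  set p : X × Y := (xl, yb) with hpdef
  have hpz : p ≤ z := ⟨hxl_le_z, hyb_le_z⟩
  have hpw : p ≤ w := hpz.trans hzw
  have hImw : ImPlusR K M cl cb w = LinearMap.range (rho K M hpw) := by
    rw [ImPlusR, hxl_w, hyb_w, (hwe p w hpw).1, inf_comm]
  -- main argument
  rintro _ ⟨v, hv, rfl⟩
  obtain ⟨hvIm, hvKer⟩ := hv
  obtain ⟨vt, hvt⟩ := (hImw ▸ hvIm : v ∈ LinearMap.range (rho K M hpw))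
  refine ⟨rho K M hpz vt, ⟨⟨?_, ?_⟩, ?_, ?_⟩, ?_⟩
  · -- ImPlusH at z
    rw [hxl_z]
    exact range_rho_le'' M (show p ≤ (xl, z.2) from ⟨le_rfl, hyb_le_z⟩)
      (show ((xl : X), z.2) ≤ z from ⟨hxl_le_z, le_rfl⟩) ⟨vt, rfl⟩
  · -- ImPlusV at z
    rw [hyb_z]
    exact range_rho_le'' M (show p ≤ (z.1, yb) from ⟨hxl_le_z, le_rfl⟩)
      (show (z.1, (yb : Y)) ≤ z from ⟨le_rfl, hyb_le_z⟩) ⟨vt, rfl⟩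
  · -- factor 1 at z
    by_cases hrU : ∃ x, x ∈ cr.upper
    · obtain ⟨x₀, hx₀⟩ := hrU
      obtain ⟨g1, hg1u, hg1⟩ := attain_KerPlusH M hM cr w hw1r hx₀
      obtain ⟨g2, hg2u, hg2⟩ := attain_KerPlusH M hM cr z hz1r hx₀
      have hxru : min g1 g2 ∈ cr.upper := by
        rcases le_total g1 g2 with h | h
        · rwa [min_eq_left h]
        · rwa [min_eq_right h]
      set xr := min g1 g2 with hxrdef
      have hxr_w := hg1 xr hxru (min_le_left _ _)
      have hxr_z := hg2 xr hxru (min_le_right _ _)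
      have hw1xr : w.1 ≤ xr := (cr.lt _ hw1r _ hxru).le
      have hz1xr : z.1 ≤ xr := hzw.1.trans hw1xr
      set q1 : X × Y := (xr, yt') with hq1def
      have hwq1 : w ≤ q1 := ⟨hw1xr, hyt'_ge_w⟩
      have hzq1 : z ≤ q1 := hzw.trans hwq1
      have hfacw : KerPlusH K M cr w ⊔ KerMinusV K M ct w ≤
          LinearMap.ker (rho K M hwq1) := by
        refine sup_le ?_ ?_
        · refine le_trans ((iInf_le _ xr).trans (iInf_le _ ⟨hxru, hw1xr⟩)) ?_
          exact ker_rho_le'' M (show w ≤ (xr, w.2) from ⟨hw1xr, le_rfl⟩)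
            (show ((xr : X), w.2) ≤ q1 from ⟨le_rfl, hyt'_ge_w⟩)
        · refine le_trans hyt'_w.le ?_
          exact ker_rho_le'' M (show w ≤ (w.1, yt') from ⟨le_rfl, hyt'_ge_w⟩)
            (show (w.1, (yt' : Y)) ≤ q1 from ⟨hw1xr, le_rfl⟩)
      have h0 : rho K M hzq1 (rho K M hpz vt) = 0 := by
        rw [rho_rho' M hpz hzq1 vt, ← rho_rho' M hpw hwq1 vt, hvt]
        exact LinearMap.mem_ker.1 (hfacw hvKer.1)
      have hmem : rho K M hpz vt ∈ LinearMap.ker (rho K M hzq1) := LinearMap.mem_ker.2 h0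
      rw [(hwe z q1 hzq1).2] at hmem
      refine (sup_le_sup ?_ ?_ : _ ≤ KerPlusH K M cr z ⊔ KerMinusV K M ct z) hmem
      · exact hxr_z.ge
      · exact le_iSup_of_le yt' (le_iSup_of_le ⟨hyt'l, hyt'_ge_z⟩ le_rfl)
    · push_neg at hrU
      rw [KerPlusH_eq_top M cr z hrU]
      exact Submodule.mem_sup_left trivial
  · -- factor 2 at z
    by_cases htU : ∃ y, y ∈ ct.upper
    · obtain ⟨y₀, hy₀⟩ := htU
      obtain ⟨g1, hg1u, hg1⟩ := attain_KerPlusV M hM ct w hw2t hy₀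
      obtain ⟨g2, hg2u, hg2⟩ := attain_KerPlusV M hM ct z hz2t hy₀
      have hytu : min g1 g2 ∈ ct.upper := by
        rcases le_total g1 g2 with h | h
        · rwa [min_eq_left h]
        · rwa [min_eq_right h]
      set yt := min g1 g2 with hytdef
      have hyt_w := hg1 yt hytu (min_le_left _ _)
      have hyt_z := hg2 yt hytu (min_le_right _ _)
      have hw2yt : w.2 ≤ yt := (ct.lt _ hw2t _ hytu).le
      have hz2yt : z.2 ≤ yt := hzw.2.trans hw2yt
      set q2 : X × Y := (xr', yt) with hq2def
      have hwq2 : w ≤ q2 := ⟨hxr'_ge_w, hw2yt⟩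
      have hzq2 : z ≤ q2 := hzw.trans hwq2
      have hfacw : KerMinusH K M cr w ⊔ KerPlusV K M ct w ≤
          LinearMap.ker (rho K M hwq2) := by
        refine sup_le ?_ ?_
        · refine le_trans hxr'_w.le ?_
          exact ker_rho_le'' M (show w ≤ (xr', w.2) from ⟨hxr'_ge_w, le_rfl⟩)
            (show ((xr' : X), w.2) ≤ q2 from ⟨le_rfl, hw2yt⟩)
        · refine le_trans ((iInf_le _ yt).trans (iInf_le _ ⟨hytu, hw2yt⟩)) ?_
          exact ker_rho_le'' M (show w ≤ (w.1, yt) from ⟨le_rfl, hw2yt⟩)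
            (show (w.1, (yt : Y)) ≤ q2 from ⟨hxr'_ge_w, le_rfl⟩)
      have h0 : rho K M hzq2 (rho K M hpz vt) = 0 := by
        rw [rho_rho' M hpz hzq2 vt, ← rho_rho' M hpw hwq2 vt, hvt]
        exact LinearMap.mem_ker.1 (hfacw hvKer.2)
      have hmem : rho K M hpz vt ∈ LinearMap.ker (rho K M hzq2) := LinearMap.mem_ker.2 h0
      rw [(hwe z q2 hzq2).2] at hmem
      refine (sup_le_sup ?_ ?_ : _ ≤ KerMinusH K M cr z ⊔ KerPlusV K M ct z) hmem
      · exact le_iSup_of_le xr' (le_iSup_of_le ⟨hxr'l, hxr'_ge_z⟩ le_rfl)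
      · exact hyt_z.ge
    · push_neg at htU
      rw [KerPlusV_eq_top M ct z htU]
      exact Submodule.mem_sup_right trivial
  · -- the images agree
    rw [rho_rho' M hpz (hzw.trans hwu) vt, ← rho_rho' M hpw hwu vt, hvt]

end Main2

section Final
variable {K : Type} [Field K] {X Y : Type} [LinearOrder X] [LinearOrder Y]
variable (M : PersistenceModule K (X × Y))

theorem rect_min_mem {cl cr : Cut X} {cb ct : Cut Y} {z w : X × Y}
    (hz : z ∈ rectOf cl cr cb ct) (hw : w ∈ rectOf cl cr cb ct) :
    ((min z.1 w.1, min z.2 w.2) : X × Y) ∈ rectOf cl cr cb ct := by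
  obtain ⟨⟨hz1l, hz1r⟩, hz2b, hz2t⟩ := hz
  obtain ⟨⟨hw1l, hw1r⟩, hw2b, hw2t⟩ := hw
  constructor
  · constructor
    · rcases le_total z.1 w.1 with h | h
      · rwa [min_eq_left h]
      · rwa [min_eq_right h]
    · rcases le_total z.1 w.1 with h | h
      · rwa [min_eq_left h]
      · rwa [min_eq_right h]
  · constructor
    · rcases le_total z.2 w.2 with h | h
      · rwa [min_eq_left h]
      · rwa [min_eq_right h]
    · rcases le_total z.2 w.2 with h | h
      · rwa [min_eq_left h]
      · rwa [min_eq_right h]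

theorem vplusMap_mono_pt (hM : Pfd K M) (hwe : WeaklyExact K M)
    (cl cr : Cut X) (cb ct : Cut Y) {w w' u : X × Y}
    (hw : w ∈ rectOf cl cr cb ct) (hw' : w' ∈ rectOf cl cr cb ct)
    (hwu : w ≤ u) (hw'u : w' ≤ u) :
    Submodule.map (rho K M hwu) (VplusAt K M cl cr cb ct w) ≤
      Submodule.map (rho K M hw'u) (VplusAt K M cl cr cb ct w') := by
  set m : X × Y := (min w.1 w'.1, min w.2 w'.2) with hmdef
  have hm : m ∈ rectOf cl cr cb ct := rect_min_mem hw hw'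
  have hmw : m ≤ w := ⟨min_le_left _ _, min_le_left _ _⟩
  have hmw' : m ≤ w' := ⟨min_le_right _ _, min_le_right _ _⟩
  refine (vplusAt_antitone M hM hwe cl cr cb ct hm hw hmw hwu).trans ?_
  have hcomp : rho K M (hmw.trans hwu) = (rho K M hw'u).comp (rho K M hmw') :=
    (rho_comp K M hmw' hw'u).symm
  rw [hcomp, Submodule.map_comp]
  exact Submodule.map_mono (vplusAt_map_le' M cl cr cb ct hmw')

theorem vplusSub_eq (hM : Pfd K M) (hwe : WeaklyExact K M)
    (cl cr : Cut X) (cb ct : Cut Y) {w₀ u : X × Y}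
    (hw₀ : w₀ ∈ rectOf cl cr cb ct) (h : w₀ ≤ u) :
    VplusSub K M cl cr cb ct u = Submodule.map (rho K M h) (VplusAt K M cl cr cb ct w₀) := by
  refine le_antisymm (iSup_le fun s => iSup_le fun hs => ?_)
    (le_iSup_of_le w₀ (le_iSup_of_le ⟨hw₀, h⟩ le_rfl))
  exact vplusMap_mono_pt M hM hwe cl cr cb ct hs.1 hw₀ hs.2 h

theorem vplusSub_eq_bot (cl cr : Cut X) (cb ct : Cut Y) {u : X × Y}
    (h : ∀ s, s ∈ rectOf cl cr cb ct → ¬ s ≤ u) :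
    VplusSub K M cl cr cb ct u = ⊥ :=
  le_bot_iff.1 (iSup_le fun s => iSup_le fun hs => absurd hs.2 (h s hs.1))

end Final

/-- **Statement 9.** The submodule `V⁺_R(M)` of a pfd weakly exact persistence bimodule,
with the restricted internal maps, is itself weakly exact. -/
theorem vplusMod_weaklyExact
    (K : Type) [Field K] (X Y : Type) [LinearOrder X] [LinearOrder Y]
    (M : PersistenceModule K (X × Y)) (hM : Pfd K M) (hwe : WeaklyExact K M)
    (l r : Cut X) (b t : Cut Y) :
    WeaklyExact K (VplusMod K M l r b t) := by
  intro s t' hst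
  have hsa : s ≤ (t'.1, s.2) := ⟨hst.1, le_rfl⟩
  have hat : (t'.1, s.2) ≤ t' := ⟨le_rfl, hst.2⟩
  have hsb : s ≤ (s.1, t'.2) := ⟨le_rfl, hst.2⟩
  have hbt : (s.1, t'.2) ≤ t' := ⟨hst.1, le_rfl⟩
  constructor
  · -- range condition
    apply le_antisymm
    · refine le_inf ?_ ?_
      · rintro _ ⟨x, rfl⟩
        exact ⟨rho K (VplusMod K M l r b t) hsa x, rho_rho (VplusMod K M l r b t) hsa hat x⟩
      · rintro _ ⟨x, rfl⟩
        exact ⟨rho K (VplusMod K M l r b t) hsb x, rho_rho (VplusMod K M l r b t) hsb hbt x⟩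
    · rintro ξ ⟨⟨α, hα⟩, ⟨β, hβ⟩⟩
      by_cases hA : ∃ wa, wa ∈ rectOf l r b t ∧ wa ≤ (t'.1, s.2)
      · by_cases hB : ∃ wb, wb ∈ rectOf l r b t ∧ wb ≤ (s.1, t'.2)
        · obtain ⟨wa, hwa, hwaa⟩ := hA
          obtain ⟨wb, hwb, hwbb⟩ := hB
          have hw₀ : ((min wa.1 wb.1, min wa.2 wb.2) : X × Y) ∈ rectOf l r b t :=
            rect_min_mem hwa hwb
          set w₀ : X × Y := (min wa.1 wb.1, min wa.2 wb.2) with hw₀def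
          have hw₀s : w₀ ≤ s :=
            ⟨(min_le_right _ _).trans hwbb.1, (min_le_left _ _).trans hwaa.2⟩
          have hα2 : α.1 ∈
              Submodule.map (rho K M (hw₀s.trans hsa)) (VplusAt K M l r b t w₀) := by
            rw [← vplusSub_eq M hM hwe l r b t hw₀ (hw₀s.trans hsa)]
            exact α.2
          obtain ⟨v, hvV, hvα⟩ := hα2
          have hmem : rho K M hw₀s v ∈ VplusSub K M l r b t s := by
            rw [vplusSub_eq M hM hwe l r b t hw₀ hw₀s]
            exact ⟨v, hvV, rfl⟩
          refine ⟨⟨rho K M hw₀s v, hmem⟩, ?_⟩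
          refine Subtype.ext ?_
          show rho K M hst (rho K M hw₀s v) = ξ.1
          have e1 : rho K M hst (rho K M hw₀s v) = rho K M (hw₀s.trans hst) v :=
            rho_rho' M hw₀s hst v
          have e2 : rho K M hat (rho K M (hw₀s.trans hsa) v) = rho K M (hw₀s.trans hst) v :=
            rho_rho' M (hw₀s.trans hsa) hat v
          have e3 : ξ.1 = rho K M hat α.1 := (congrArg Subtype.val hα).symm
          rw [e1, ← e2, hvα, ← e3]
        · have hbot := vplusSub_eq_bot M l r b t (fun s' hs' hle => hB ⟨s', hs', hle⟩)
          have hβ0 : β.1 = 0 := (Submodule.eq_bot_iff _).1 hbot β.1 β.2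
          have hξ0 : ξ = 0 := by
            rw [← hβ]
            refine Subtype.ext ?_
            show rho K M hbt β.1 = 0
            rw [hβ0, map_zero]
          rw [hξ0]
          exact zero_mem _
      · have hbot := vplusSub_eq_bot M l r b t (fun s' hs' hle => hA ⟨s', hs', hle⟩)
        have hα0 : α.1 = 0 := (Submodule.eq_bot_iff _).1 hbot α.1 α.2
        have hξ0 : ξ = 0 := by
          rw [← hα]
          refine Subtype.ext ?_
          show rho K M hat α.1 = 0
          rw [hα0, map_zero]
        rw [hξ0]
        exact zero_mem _
  · -- kernel condition
    apply le_antisymm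
    · intro ξ hξ
      have hξ0 : rho K M hst ξ.1 = 0 := by
        have h0 := LinearMap.mem_ker.1 hξ
        exact congrArg Subtype.val h0
      by_cases hS : ∃ w₀, w₀ ∈ rectOf l r b t ∧ w₀ ≤ s
      · obtain ⟨w₀, hw₀, hw₀s⟩ := hS
        have hξ2 : ξ.1 ∈ Submodule.map (rho K M hw₀s) (VplusAt K M l r b t w₀) := by
          rw [← vplusSub_eq M hM hwe l r b t hw₀ hw₀s]
          exact ξ.2
        obtain ⟨v, hvV, hvξ⟩ := hξ2
        have hvker : v ∈ LinearMap.ker (rho K M (hw₀s.trans hst)) := by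
          refine LinearMap.mem_ker.2 ?_
          rw [← rho_rho' M hw₀s hst v, hvξ]
          exact hξ0
        have hsplit := kernelSplit M hM hwe l r b t hw₀ (hw₀s.trans hst) ⟨hvV, hvker⟩
        obtain ⟨m, hm, n, hn, hmn⟩ := Submodule.mem_sup.1 hsplit
        have hmemm : rho K M hw₀s m ∈ VplusSub K M l r b t s := by
          rw [vplusSub_eq M hM hwe l r b t hw₀ hw₀s]
          exact ⟨m, hm.1, rfl⟩
        have hmemn : rho K M hw₀s n ∈ VplusSub K M l r b t s := by
          rw [vplusSub_eq M hM hwe l r b t hw₀ hw₀s]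
          exact ⟨n, hn.1, rfl⟩
        refine Submodule.mem_sup.2 ⟨⟨rho K M hw₀s m, hmemm⟩, ?_, ⟨rho K M hw₀s n, hmemn⟩, ?_, ?_⟩
        · refine LinearMap.mem_ker.2 (Subtype.ext ?_)
          show rho K M hsa (rho K M hw₀s m) = 0
          have e1 : rho K M hsa (rho K M hw₀s m) = rho K M (hw₀s.trans hsa) m :=
            rho_rho' M hw₀s hsa m
          have e2 : rho K M (show ((t'.1 : X), w₀.2) ≤ (t'.1, s.2) from ⟨le_rfl, hw₀s.2⟩)
              (rho K M (show w₀ ≤ (t'.1, w₀.2) from ⟨(hw₀s.trans hst).1, le_rfl⟩) m) =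
              rho K M (hw₀s.trans hsa) m :=
            rho_rho' M _ _ m
          rw [e1, ← e2, LinearMap.mem_ker.1 hm.2, map_zero]
        · refine LinearMap.mem_ker.2 (Subtype.ext ?_)
          show rho K M hsb (rho K M hw₀s n) = 0
          have e1 : rho K M hsb (rho K M hw₀s n) = rho K M (hw₀s.trans hsb) n :=
            rho_rho' M hw₀s hsb n
          have e2 : rho K M (show (w₀.1, (t'.2 : Y)) ≤ (s.1, t'.2) from ⟨hw₀s.1, le_rfl⟩)
              (rho K M (show w₀ ≤ (w₀.1, t'.2) from ⟨le_rfl, (hw₀s.trans hst).2⟩) n) =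
              rho K M (hw₀s.trans hsb) n :=
            rho_rho' M _ _ n
          rw [e1, ← e2, LinearMap.mem_ker.1 hn.2, map_zero]
        · refine Subtype.ext ?_
          show rho K M hw₀s m + rho K M hw₀s n = ξ.1
          rw [← map_add, hmn, hvξ]
      · have hbot : VplusSub K M l r b t s = ⊥ :=
          vplusSub_eq_bot M l r b t (fun s' hs' hle => hS ⟨s', hs', hle⟩)
        have hz : ξ = 0 := Subtype.ext ((Submodule.eq_bot_iff _).1 hbot ξ.1 ξ.2)
        rw [hz]
        exact zero_mem _
    · refine sup_le ?_ ?_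
      · intro x hx
        refine LinearMap.mem_ker.2 ?_
        have e1 : rho K (VplusMod K M l r b t) hat (rho K (VplusMod K M l r b t) hsa x) =
            rho K (VplusMod K M l r b t) hst x := rho_rho (VplusMod K M l r b t) hsa hat x
        rw [← e1, LinearMap.mem_ker.1 hx, map_zero]
      · intro x hx
        refine LinearMap.mem_ker.2 ?_
        have e1 : rho K (VplusMod K M l r b t) hbt (rho K (VplusMod K M l r b t) hsb x) =
            rho K (VplusMod K M l r b t) hst x := rho_rho (VplusMod K M l r b t) hsb hbt x
        rw [← e1, LinearMap.mem_ker.1 hx, map_zero]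
end
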